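/- arXiv:0711.0131 — 3 statements merged into one kernel-verified Lean document; each statement's English description precedes it below -/
import Mathlib

section
/- If φ is a state on a C*-tensor product A₁ ⊗_β A₂ (a C*-completion of the algebraic tensor product of unital C*-algebras A₁ and A₂) such that the restriction φ₁ of φ to A₁ (given by φ₁(a) = φ(a ⊗ 1)) is a pure state of A₁, then φ factors as φ = φ₁ ⊗ φ₂ for some state φ₂ on A₂, i.e., φ(a ⊗ b) = φ₁(a)·φ₂(b) for all a ∈ A₁, b ∈ A₂. -/
set_option maxHeartbeats 1000000
set_option synthInstance.maxHeartbeats 1000000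

open scoped ComplexOrder TensorProduct

noncomputable section

/-- A state on a (possibly non-unital) normed star algebra: a norm-one positive
continuous linear functional. -/
def IsState {A : Type*} [NonUnitalNormedRing A] [StarRing A] [NormedSpace ℂ A]
    (φ : A →L[ℂ] ℂ) : Prop :=
  ‖φ‖ = 1 ∧ ∀ a : A, 0 ≤ φ (star a * a)

/-- A pure state: a state which is an extreme point of the state space. -/
def IsPureState {A : Type*} [NonUnitalNormedRing A] [StarRing A] [NormedSpace ℂ A]
    (φ : A →L[ℂ] ℂ) : Prop :=
  IsState φ ∧ ∀ (ψ₁ ψ₂ : A →L[ℂ] ℂ) (t : ℝ), IsState ψ₁ → IsState ψ₂ → 0 < t → t < 1 →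
    φ = (t : ℂ) • ψ₁ + ((1 : ℂ) - (t : ℂ)) • ψ₂ → ψ₁ = φ ∧ ψ₂ = φ

/-- A maximal abelian self-adjoint subalgebra (masa) of a (possibly non-unital)
C*-algebra: an abelian *-subalgebra equal to its own relative commutant. -/
def IsMasa {A : Type*} [NonUnitalCStarAlgebra A] (C : NonUnitalStarSubalgebra ℂ A) : Prop :=
  (∀ x ∈ C, ∀ y ∈ C, x * y = y * x) ∧ ∀ x : A, (∀ c ∈ C, c * x = x * c) → x ∈ C

/-- A masa of a unital C*-algebra (unital version). -/
def IsMasaU {A : Type*} [CStarAlgebra A] (C : StarSubalgebra ℂ A) : Prop :=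
  (∀ x ∈ C, ∀ y ∈ C, x * y = y * x) ∧ ∀ x : A, (∀ c ∈ C, c * x = x * c) → x ∈ C

/-- The Kadison-Singer extension property for a subalgebra of a possibly non-unital
C*-algebra: (i) every pure state (character) of `C` has a unique pure state extension
to `A`, and (ii) no pure state of `A` annihilates `C`. -/
def HasExtensionProperty {A : Type*} [NonUnitalCStarAlgebra A]
    (C : NonUnitalStarSubalgebra ℂ A) : Prop :=
  (∀ χ : ↥C →L[ℂ] ℂ, IsPureState χ →
      ∃! φ : A →L[ℂ] ℂ, IsPureState φ ∧ ∀ c : ↥C, φ ↑c = χ c) ∧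
  ∀ φ : A →L[ℂ] ℂ, IsPureState φ → ∃ c ∈ C, φ c ≠ 0

/-- The extension property for a unital subalgebra of a unital C*-algebra: every pure
state (character) of `C` has a unique pure state extension to `A`. -/
def HasExtensionPropertyU {A : Type*} [CStarAlgebra A] (C : StarSubalgebra ℂ A) : Prop :=
  ∀ χ : ↥C →L[ℂ] ℂ, IsPureState χ →
    ∃! φ : A →L[ℂ] ℂ, IsPureState φ ∧ ∀ c : ↥C, φ ↑c = χ c

/-- A C*-completion `T` of the algebraic tensor product `A₁ ⊙ A₂` with respect to a
C*-norm `β`: a C*-algebra together with commuting isometric embeddings of the factors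
such that the induced map on the algebraic tensor product is injective (i.e. the norm
of `T` restricts to a genuine C*-norm on `A₁ ⊙ A₂`) and has dense range. -/
structure CStarCompletion (A₁ A₂ T : Type*) [NonUnitalCStarAlgebra A₁]
    [NonUnitalCStarAlgebra A₂] [NonUnitalCStarAlgebra T] where
  ι₁ : A₁ →⋆ₙₐ[ℂ] T
  ι₂ : A₂ →⋆ₙₐ[ℂ] T
  isometry₁ : Isometry ι₁
  isometry₂ : Isometry ι₂
  commutes : ∀ (a : A₁) (b : A₂), ι₁ a * ι₂ b = ι₂ b * ι₁ a
  injective : ∀ (n : ℕ) (a : Fin n → A₁) (b : Fin n → A₂),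
      (∑ i, ι₁ (a i) * ι₂ (b i)) = 0 → (∑ i, a i ⊗ₜ[ℂ] b i : A₁ ⊗[ℂ] A₂) = 0
  dense_span : Dense (Submodule.span ℂ {x : T | ∃ a b, x = ι₁ a * ι₂ b} : Set T)

/-- The closure, in a C*-completion `T` of `A₁ ⊙ A₂`, of the linear span of the
elementary tensors `c₁ ⊗ c₂` with `cᵢ` in given subsets of the factors: this is the
canonical copy of `C₁ ⊗ C₂` inside `A₁ ⊗_β A₂`. -/
def tensorSet {A₁ A₂ T : Type*} [NonUnitalCStarAlgebra A₁] [NonUnitalCStarAlgebra A₂]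
    [NonUnitalCStarAlgebra T] (K : CStarCompletion A₁ A₂ T)
    (S₁ : Set A₁) (S₂ : Set A₂) : Set T :=
  closure (Submodule.span ℂ {x : T | ∃ a ∈ S₁, ∃ b ∈ S₂, x = K.ι₁ a * K.ι₂ b} : Set T)

/-- The canonical copy of `C₁ ⊗ C₂` inside `A₁ ⊗_β A₂`, as a closed non-unital
star subalgebra. -/
def tensorSubalg {A₁ A₂ T : Type*} [NonUnitalCStarAlgebra A₁] [NonUnitalCStarAlgebra A₂]
    [NonUnitalCStarAlgebra T] (K : CStarCompletion A₁ A₂ T)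
    (C₁ : NonUnitalStarSubalgebra ℂ A₁) (C₂ : NonUnitalStarSubalgebra ℂ A₂) :
    NonUnitalStarSubalgebra ℂ T :=
  (NonUnitalStarAlgebra.adjoin ℂ
    {x : T | ∃ a ∈ C₁, ∃ b ∈ C₂, x = K.ι₁ a * K.ι₂ b}).topologicalClosure

/-- A (two-sided) bounded approximate identity indexed by a directed set. -/
def IsApproxIdentity {A : Type*} [NonUnitalCStarAlgebra A] {ι : Type}
    [Preorder ι] (e : ι → A) : Prop :=
  (∀ i, ‖e i‖ ≤ 1) ∧ ∀ a : A,
    Filter.Tendsto (fun i => e i * a) Filter.atTop (nhds a) ∧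
    Filter.Tendsto (fun i => a * e i) Filter.atTop (nhds a)

/-- `S` contains a bounded approximate identity for `A`. -/
def ContainsApproxIdentity {A : Type*} [NonUnitalCStarAlgebra A] (S : Set A) : Prop :=
  ∃ (ι : Type) (_ : SemilatticeSup ι) (_ : Nonempty ι) (e : ι → A),
    (∀ i, e i ∈ S) ∧ IsApproxIdentity e


section helpers
variable {A : Type*} [CStarAlgebra A]

lemma pos_cs (f : A →L[ℂ] ℂ) (hf : ∀ a, 0 ≤ f (star a * a)) (x y : A) :
    ‖f (star x * y)‖ ^ 2 ≤ (f (star x * x)).re * (f (star y * y)).re := by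
  set B := f (star x * y) with hB
  set B' := f (star y * x) with hB'
  have key : ∀ t : ℂ, 0 ≤ f (star x * x) + (starRingEnd ℂ t) * B' + t * B
      + ((starRingEnd ℂ t) * t) * f (star y * y) := by
    intro t
    have expand : star (x + t • y) * (x + t • y) =
        star x * x + (starRingEnd ℂ t) • (star y * x) + t • (star x * y)
          + ((starRingEnd ℂ t) * t) • (star y * y) := by
      simp only [star_add, star_smul, add_mul, mul_add, smul_mul_assoc, mul_smul_comm,
        smul_smul, RCLike.star_def]
      rw [smul_add, smul_smul, mul_comm t]; simp only [add_assoc]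
    have := hf (x + t • y)
    rw [expand] at this
    simpa [smul_eq_mul] using this
  have hA := Complex.nonneg_iff.mp (hf x)
  have hC := Complex.nonneg_iff.mp (hf y)
  have h1 := (Complex.nonneg_iff.mp (key 1)).2
  have hI := (Complex.nonneg_iff.mp (key Complex.I)).2
  simp only [map_one, one_mul, mul_one, Complex.add_im, Complex.mul_im, Complex.conj_re,
    Complex.conj_im, Complex.I_re, Complex.I_im, Complex.conj_I, neg_mul, Complex.I_mul_I, Complex.neg_re, Complex.neg_im, neg_neg, Complex.one_re, Complex.one_im, zero_mul, zero_add] at h1 hI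
  have hsym : B' = starRingEnd ℂ B := by
    apply Complex.ext
    · rw [Complex.conj_re]; linarith [hA.2, hC.2, hI]
    · rw [Complex.conj_im]; linarith [hA.2, hC.2, h1]
  have main : ∀ s : ℝ, 0 ≤ (f (star x * x)).re - 2 * s * ‖B‖ ^ 2
      + s ^ 2 * ‖B‖ ^ 2 * (f (star y * y)).re := by
    intro s
    have hk := (Complex.nonneg_iff.mp (key (-(s : ℂ) * starRingEnd ℂ B))).1
    rw [hsym] at hk
    have hnB : ‖B‖ ^ 2 = B.re ^ 2 + B.im ^ 2 := by
      rw [Complex.sq_norm, Complex.normSq_apply]; ring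
    simp only [map_mul, map_neg, Complex.conj_conj, Complex.conj_ofReal, Complex.add_re,
      Complex.mul_re, Complex.mul_im, Complex.neg_re, Complex.neg_im, Complex.ofReal_re,
      Complex.ofReal_im, Complex.conj_re, Complex.conj_im] at hk
    rw [hnB]
    nlinarith [hk, hA.2, hC.2]
  by_cases hBz : ‖B‖ ^ 2 = 0
  · rw [hBz]; exact mul_nonneg hA.1 hC.1
  have hn : 0 < ‖B‖ ^ 2 := lt_of_le_of_ne (sq_nonneg _) (Ne.symm hBz)
  rcases eq_or_lt_of_le hC.1 with hc | hc
  · exfalso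
    have h := main (((f (star x * x)).re + 1) / (2 * ‖B‖ ^ 2))
    rw [← hc] at h
    have h2 : (((f (star x * x)).re + 1) / (2 * ‖B‖ ^ 2)) * (2 * ‖B‖ ^ 2)
        = (f (star x * x)).re + 1 :=
      div_mul_cancel₀ _ (by nlinarith [hn] : (0:ℝ) < 2 * ‖B‖ ^ 2).ne'
    nlinarith [h, h2]
  · have h := main (1 / (f (star y * y)).re)
    have h2 : (1 / (f (star y * y)).re) * (f (star y * y)).re = 1 :=
      one_div_mul_cancel hc.ne'
    have h3 : (1 / (f (star y * y)).re) ^ 2 * ‖B‖ ^ 2 * (f (star y * y)).re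
        = (1 / (f (star y * y)).re) * ‖B‖ ^ 2 := by
      field_simp
    rw [h3] at h
    have h4 : (1 / (f (star y * y)).re) * (f (star y * y)).re * ‖B‖ ^ 2 = ‖B‖ ^ 2 := by
      rw [h2, one_mul]
    nlinarith [h, hc, h4]


lemma pos_apply_one_nonneg (f : A →L[ℂ] ℂ) (hf : ∀ a, 0 ≤ f (star a * a)) : 0 ≤ f 1 := by
  simpa using hf 1

lemma pos_norm_le (f : A →L[ℂ] ℂ) (hf : ∀ a, 0 ≤ f (star a * a)) : ‖f‖ ≤ (f 1).re := by
  have h1 : 0 ≤ (f 1).re := (Complex.nonneg_iff.mp (pos_apply_one_nonneg f hf)).1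
  have key : ∀ a : A, ‖f a‖ ≤ Real.sqrt ((f 1).re * ‖f‖) * ‖a‖ := by
    intro a
    have hcs := pos_cs f hf 1 a
    simp only [star_one, one_mul] at hcs
    have h2 : (f (star a * a)).re ≤ ‖f‖ * ‖a‖ ^ 2 := by
      calc (f (star a * a)).re ≤ ‖f (star a * a)‖ := Complex.re_le_norm _
        _ ≤ ‖f‖ * ‖star a * a‖ := f.le_opNorm _
        _ = ‖f‖ * ‖a‖ ^ 2 := by rw [CStarRing.norm_star_mul_self]; ring
    have h3 : ‖f a‖ ^ 2 ≤ ((f 1).re * ‖f‖) * ‖a‖ ^ 2 := by nlinarith [hcs, h2, h1]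
    calc ‖f a‖ = Real.sqrt (‖f a‖ ^ 2) := by rw [Real.sqrt_sq (norm_nonneg _)]
      _ ≤ Real.sqrt (((f 1).re * ‖f‖) * ‖a‖ ^ 2) := Real.sqrt_le_sqrt h3
      _ = Real.sqrt ((f 1).re * ‖f‖) * ‖a‖ := by
          rw [Real.sqrt_mul (mul_nonneg h1 (norm_nonneg f)), Real.sqrt_sq (norm_nonneg _)]
  have h4 : ‖f‖ ≤ Real.sqrt ((f 1).re * ‖f‖) := f.opNorm_le_bound (Real.sqrt_nonneg _) key
  have h5 : ‖f‖ ^ 2 ≤ (f 1).re * ‖f‖ := by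
    have hsq := Real.sq_sqrt (mul_nonneg h1 (norm_nonneg f))
    nlinarith [h4, Real.sqrt_nonneg ((f 1).re * ‖f‖), norm_nonneg f]
  rcases eq_or_lt_of_le (norm_nonneg f) with h0 | h0
  · rw [← h0]; exact h1
  · nlinarith [h5, h0]

lemma re_one_le_norm (f : A →L[ℂ] ℂ) : (f 1).re ≤ ‖f‖ := by
  calc (f 1).re ≤ ‖f 1‖ := Complex.re_le_norm _
    _ ≤ ‖f‖ * ‖(1:A)‖ := f.le_opNorm _
    _ ≤ ‖f‖ * 1 := by
        have hn : ‖(1:A)‖ * ‖(1:A)‖ = ‖(1:A)‖ := by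
          rw [← CStarRing.norm_star_mul_self, star_one, one_mul]
        have h1le : ‖(1:A)‖ ≤ 1 := by nlinarith [hn, norm_nonneg (1:A)]
        exact mul_le_mul_of_nonneg_left h1le (norm_nonneg f)
    _ = ‖f‖ := mul_one _

lemma state_apply_one (f : A →L[ℂ] ℂ) (hf : IsState f) : f 1 = 1 := by
  have hpos := Complex.nonneg_iff.mp (pos_apply_one_nonneg f hf.2)
  have h1 : ‖f‖ ≤ (f 1).re := pos_norm_le f hf.2
  have h2 := re_one_le_norm f
  rw [hf.1] at h1 h2
  apply Complex.ext
  · simpa using le_antisymm h2 h1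
  · simpa using hpos.2.symm

lemma isState_of_pos_one (f : A →L[ℂ] ℂ) (hpos : ∀ a, 0 ≤ f (star a * a))
    (h1 : f 1 = 1) : IsState f := by
  refine ⟨?_, hpos⟩
  have hle : ‖f‖ ≤ (f 1).re := pos_norm_le f hpos
  have hge := re_one_le_norm f
  rw [h1] at hle hge
  simp only [Complex.one_re] at hle hge
  linarith

lemma pos_eq_zero (f : A →L[ℂ] ℂ) (hpos : ∀ a, 0 ≤ f (star a * a))
    (h1 : f 1 = 0) : f = 0 := by
  have hle : ‖f‖ ≤ (f 1).re := pos_norm_le f hpos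
  rw [h1] at hle
  simp only [Complex.zero_re] at hle
  exact norm_le_zero_iff.mp hle

/-- A positive functional dominated by a pure state is a multiple of it. -/
lemma pure_dominated (φ : A →L[ℂ] ℂ) (hφ : IsPureState φ)
    (ψ : A →L[ℂ] ℂ) (hψ : ∀ a, 0 ≤ ψ (star a * a))
    (hd : ∀ a, 0 ≤ (φ - ψ) (star a * a)) :
    ψ = ψ 1 • φ := by
  have hφs := hφ.1
  have hφ1 : φ 1 = 1 := state_apply_one φ hφs
  have hψ1 := Complex.nonneg_iff.mp (pos_apply_one_nonneg ψ hψ)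
  set t : ℝ := (ψ 1).re with ht
  have hψ1' : ψ 1 = (t : ℂ) := by
    apply Complex.ext
    · simp [ht]
    · simp [← hψ1.2]
  have hd1 := Complex.nonneg_iff.mp (pos_apply_one_nonneg _ hd)
  have hsub : ((φ - ψ) 1) = 1 - (t : ℂ) := by
    simp [hφ1, hψ1']
  have ht1 : t ≤ 1 := by
    have h := hd1.1
    rw [hsub] at h
    simpa using h
  have ht0 : 0 ≤ t := hψ1.1
  rcases eq_or_lt_of_le ht0 with h0 | h0
  · have hz : ψ = 0 := pos_eq_zero ψ hψ (by rw [hψ1', ← h0]; simp)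
    rw [hz]; ext a; simp
  rcases eq_or_lt_of_le ht1 with h1 | h1
  · have hδ : φ - ψ = 0 := pos_eq_zero _ hd (by rw [hsub, h1]; simp)
    have heq : ψ = φ := (sub_eq_zero.mp hδ).symm
    rw [heq, hφ1, one_smul]
  · set ψ₁ : A →L[ℂ] ℂ := ((t : ℂ)⁻¹) • ψ with hψ₁
    set ψ₂ : A →L[ℂ] ℂ := (((1 - t : ℝ) : ℂ)⁻¹) • (φ - ψ) with hψ₂
    have htne : (t : ℂ) ≠ 0 := by exact_mod_cast h0.ne'
    have h1tne : ((1 - t : ℝ) : ℂ) ≠ 0 := by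
      have : (1 - t : ℝ) ≠ 0 := by linarith
      exact_mod_cast this
    have hs₁ : IsState ψ₁ := by
      apply isState_of_pos_one
      · intro a
        have : (0:ℂ) ≤ (t:ℂ)⁻¹ := by
          rw [← Complex.ofReal_inv]
          rw [Complex.nonneg_iff]
          constructor
          · simp [inv_nonneg, ht0]
          · simp
        simpa [hψ₁, smul_eq_mul] using mul_nonneg this (hψ a)
      · simp [hψ₁, hψ1', inv_mul_cancel₀ htne, smul_eq_mul]
    have hs₂ : IsState ψ₂ := by
      apply isState_of_pos_one
      · intro a
        have : (0:ℂ) ≤ ((1 - t : ℝ):ℂ)⁻¹ := by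
          rw [← Complex.ofReal_inv, Complex.nonneg_iff]
          constructor
          · simp only [Complex.ofReal_re]
            have : (0:ℝ) ≤ (1 - t) := by linarith
            positivity
          · simp
        simpa [hψ₂, smul_eq_mul] using mul_nonneg this (hd a)
      · rw [hψ₂]
        simp only [ContinuousLinearMap.smul_apply, hsub, smul_eq_mul]
        rw [show (1 : ℂ) - (t:ℂ) = ((1 - t : ℝ) : ℂ) by push_cast; ring]
        exact inv_mul_cancel₀ h1tne
    have hdecomp : φ = (t : ℂ) • ψ₁ + ((1 : ℂ) - (t : ℂ)) • ψ₂ := by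
      rw [hψ₁, hψ₂, smul_smul, smul_smul, mul_inv_cancel₀ htne,
        show (1 : ℂ) - (t:ℂ) = ((1 - t : ℝ) : ℂ) by push_cast; ring,
        mul_inv_cancel₀ h1tne]
      simp
    obtain ⟨he₁, -⟩ := hφ.2 ψ₁ ψ₂ t hs₁ hs₂ h0 h1 hdecomp
    have hfinal : ψ = (t : ℂ) • φ := by
      rw [← he₁, hψ₁, smul_smul, mul_inv_cancel₀ htne, one_smul]
    rw [hψ1']
    exact hfinal

end helpers

/-- if the restriction of a state `φ` on `A₁ ⊗_β A₂` to `A₁` is pure,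
then `φ` factors as `φ₁ ⊗ φ₂`. -/
theorem stmt_0 {A₁ A₂ T : Type*} [CStarAlgebra A₁] [CStarAlgebra A₂] [CStarAlgebra T]
    (K : CStarCompletion A₁ A₂ T)
    (φ : T →L[ℂ] ℂ) (hφ : IsState φ)
    (φ₁ : A₁ →L[ℂ] ℂ) (hφ₁ : ∀ a : A₁, φ₁ a = φ (K.ι₁ a))
    (hpure : IsPureState φ₁) :
    ∃ φ₂ : A₂ →L[ℂ] ℂ, IsState φ₂ ∧
      ∀ (a : A₁) (b : A₂), φ (K.ι₁ a * K.ι₂ b) = φ₁ a * φ₂ b := by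
  classical
  letI : PartialOrder A₂ := CStarAlgebra.spectralOrder A₂
  letI : StarOrderedRing A₂ := CStarAlgebra.spectralOrderedRing A₂
  -- Step 1: the embeddings are unital
  have hgen : ∀ x ∈ {x : T | ∃ a b, x = K.ι₁ a * K.ι₂ b},
      K.ι₁ 1 * K.ι₂ 1 * x = x := by
    rintro x ⟨a, b, rfl⟩
    calc K.ι₁ 1 * K.ι₂ 1 * (K.ι₁ a * K.ι₂ b)
        = K.ι₁ 1 * (K.ι₂ 1 * K.ι₁ a) * K.ι₂ b := by simp only [mul_assoc]
      _ = K.ι₁ 1 * (K.ι₁ a * K.ι₂ 1) * K.ι₂ b := by rw [K.commutes a 1]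
      _ = (K.ι₁ 1 * K.ι₁ a) * (K.ι₂ 1 * K.ι₂ b) := by simp only [mul_assoc]
      _ = K.ι₁ a * K.ι₂ b := by rw [← map_mul, ← map_mul, one_mul, one_mul]
  have hspan : ∀ x ∈ (Submodule.span ℂ {x : T | ∃ a b, x = K.ι₁ a * K.ι₂ b} : Set T),
      K.ι₁ 1 * K.ι₂ 1 * x = x := by
    intro x hx
    induction hx using Submodule.span_induction with
    | mem x h => exact hgen x h
    | zero => simp
    | add x y hx hy ihx ihy => rw [mul_add, ihx, ihy]
    | smul c x hx ih => rw [mul_smul_comm, ih]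
  have hall : ∀ x : T, K.ι₁ 1 * K.ι₂ 1 * x = x := by
    have hclosed : IsClosed {x : T | K.ι₁ 1 * K.ι₂ 1 * x = x} :=
      isClosed_eq (continuous_mul_left _) continuous_id
    have hsubset := closure_minimal hspan hclosed
    intro x
    exact hsubset (by rw [K.dense_span.closure_eq]; trivial)
  have heu : K.ι₁ 1 * K.ι₂ 1 = 1 := by
    have := hall 1; rwa [mul_one] at this
  have hι₁1 : K.ι₁ 1 = 1 := by
    calc K.ι₁ 1 = K.ι₁ 1 * (K.ι₁ 1 * K.ι₂ 1) := by rw [heu, mul_one]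
      _ = (K.ι₁ 1 * K.ι₁ 1) * K.ι₂ 1 := by rw [mul_assoc]
      _ = K.ι₁ 1 * K.ι₂ 1 := by rw [← map_mul, one_mul]
      _ = 1 := heu
  have hι₂1 : K.ι₂ 1 = 1 := by
    calc K.ι₂ 1 = (K.ι₁ 1 * K.ι₂ 1) * K.ι₂ 1 := by rw [heu, one_mul]
      _ = K.ι₁ 1 * (K.ι₂ 1 * K.ι₂ 1) := mul_assoc _ _ _
      _ = K.ι₁ 1 * K.ι₂ 1 := by rw [← map_mul, one_mul]
      _ = 1 := heu
  -- Step 2: basic facts about φ and φ₁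
  have hφone : φ 1 = 1 := state_apply_one φ hφ
  have hstarmul₁ : ∀ a : A₁, K.ι₁ (star a * a) = star (K.ι₁ a) * K.ι₁ a := by
    intro a; rw [map_mul, map_star]
  have hstarmul₂ : ∀ b : A₂, K.ι₂ (star b * b) = star (K.ι₂ b) * K.ι₂ b := by
    intro b; rw [map_mul, map_star]
  have hφ₁pos : ∀ a : A₁, 0 ≤ φ₁ (star a * a) := by
    intro a; rw [hφ₁, hstarmul₁]; exact hφ.2 _
  have hφ₁one : φ₁ 1 = 1 := by rw [hφ₁, hι₁1, hφone]
  -- Step 3: the continuous linear map φ₂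
  let ι₂L : A₂ →L[ℂ] T := LinearMap.mkContinuous (K.ι₂ : A₂ →ₗ[ℂ] T) 1
    (fun b => by
      rw [one_mul]
      exact le_of_eq (K.isometry₂.norm_map_of_map_zero (map_zero _) b))
  set φ₂ : A₂ →L[ℂ] ℂ := φ.comp ι₂L with hφ₂def
  have hφ₂apply : ∀ b : A₂, φ₂ b = φ (K.ι₂ b) := fun b => rfl
  have hφ₂state : IsState φ₂ := by
    apply isState_of_pos_one
    · intro b
      rw [hφ₂apply, hstarmul₂]
      exact hφ.2 _
    · rw [hφ₂apply, hι₂1, hφone]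
  refine ⟨φ₂, hφ₂state, ?_⟩
  -- Step 4: the key identity for positive contractions
  have hsq : ∀ (a : A₁) (c : A₂), star (K.ι₂ c * K.ι₁ a) * (K.ι₂ c * K.ι₁ a)
      = K.ι₁ (star a * a) * K.ι₂ (star c * c) := by
    intro a c
    calc star (K.ι₂ c * K.ι₁ a) * (K.ι₂ c * K.ι₁ a)
        = star (K.ι₁ a) * ((star (K.ι₂ c) * K.ι₂ c) * K.ι₁ a) := by
          rw [star_mul]; simp only [mul_assoc]
      _ = star (K.ι₁ a) * (K.ι₂ (star c * c) * K.ι₁ a) := by rw [hstarmul₂]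
      _ = star (K.ι₁ a) * (K.ι₁ a * K.ι₂ (star c * c)) := by
          rw [K.commutes a (star c * c)]
      _ = (star (K.ι₁ a) * K.ι₁ a) * K.ι₂ (star c * c) := by rw [mul_assoc]
      _ = K.ι₁ (star a * a) * K.ι₂ (star c * c) := by rw [hstarmul₁]
  have hposφ : ∀ (a : A₁) (b : A₂), 0 ≤ b → 0 ≤ φ (K.ι₁ (star a * a) * K.ι₂ b) := by
    intro a b hb
    have hcsa : IsSelfAdjoint (CFC.sqrt b) := IsSelfAdjoint.of_nonneg (CFC.sqrt_nonneg b)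
    have hcc : star (CFC.sqrt b) * CFC.sqrt b = b := by
      rw [hcsa.star_eq, CFC.sqrt_mul_sqrt_self b hb]
    rw [← hcc, ← hsq a]
    exact hφ.2 _
  -- the key identity for positive contractions
  have hkey : ∀ b : A₂, 0 ≤ b → ‖b‖ ≤ 1 → ∀ a : A₁,
      φ (K.ι₁ a * K.ι₂ b) = φ₁ a * φ₂ b := by
    intro b hb hb1 a
    have hb1' : b ≤ 1 := (CStarAlgebra.norm_le_one_iff_of_nonneg b hb).mp hb1
    have h1b : 0 ≤ 1 - b := sub_nonneg.mpr hb1'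
    -- the functional ψ : a ↦ φ (ι₁ a * ι₂ b)
    let ψlin : A₁ →ₗ[ℂ] ℂ :=
      { toFun := fun a => φ (K.ι₁ a * K.ι₂ b)
        map_add' := fun x y => by
          show φ (K.ι₁ (x + y) * K.ι₂ b) = φ (K.ι₁ x * K.ι₂ b) + φ (K.ι₁ y * K.ι₂ b)
          rw [map_add, add_mul, map_add]
        map_smul' := fun z x => by
          show φ (K.ι₁ (z • x) * K.ι₂ b) = z • φ (K.ι₁ x * K.ι₂ b)
          rw [map_smul, smul_mul_assoc, map_smul] }
    have hbound : ∀ x : A₁, ‖ψlin x‖ ≤ (‖φ‖ * ‖K.ι₂ b‖) * ‖x‖ := by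
      intro x
      calc ‖φ (K.ι₁ x * K.ι₂ b)‖ ≤ ‖φ‖ * ‖K.ι₁ x * K.ι₂ b‖ := φ.le_opNorm _
        _ ≤ ‖φ‖ * (‖K.ι₁ x‖ * ‖K.ι₂ b‖) := by
            gcongr
            exact norm_mul_le _ _
        _ = (‖φ‖ * ‖K.ι₂ b‖) * ‖x‖ := by
            rw [K.isometry₁.norm_map_of_map_zero (map_zero _)]; ring
    let ψ : A₁ →L[ℂ] ℂ := LinearMap.mkContinuous ψlin (‖φ‖ * ‖K.ι₂ b‖) hbound
    have hψapply : ∀ x : A₁, ψ x = φ (K.ι₁ x * K.ι₂ b) := fun x => rfl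
    have hψpos : ∀ x : A₁, 0 ≤ ψ (star x * x) := by
      intro x
      rw [hψapply]
      exact hposφ x b hb
    have hψdom : ∀ x : A₁, 0 ≤ (φ₁ - ψ) (star x * x) := by
      intro x
      have hrw : (φ₁ - ψ) (star x * x) = φ (K.ι₁ (star x * x) * K.ι₂ (1 - b)) := by
        rw [map_sub, hι₂1, mul_sub, mul_one, map_sub, ContinuousLinearMap.sub_apply,
          hψapply, hφ₁]
      rw [hrw]
      exact hposφ x (1 - b) h1b
    have hfact := pure_dominated φ₁ hpure ψ hψpos hψdom
    have hψ1 : ψ 1 = φ₂ b := by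
      rw [hψapply, hι₁1, one_mul, hφ₂apply]
    calc φ (K.ι₁ a * K.ι₂ b) = ψ a := (hψapply a).symm
      _ = (ψ 1 • φ₁) a := DFunLike.congr_fun hfact a
      _ = φ₁ a * φ₂ b := by
          rw [ContinuousLinearMap.smul_apply, hψ1, smul_eq_mul, mul_comm]
  -- extend to all positive b by scaling
  have hpos_all : ∀ b : A₂, 0 ≤ b → ∀ a : A₁, φ (K.ι₁ a * K.ι₂ b) = φ₁ a * φ₂ b := by
    intro b hb a
    rcases eq_or_ne b 0 with rfl | hbne
    · simp [hφ₂apply]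
    · have hnb : (0:ℝ) < ‖b‖ := norm_pos_iff.mpr hbne
      set b' : A₂ := ((‖b‖⁻¹ : ℝ) : ℂ) • b with hb'
      have hb'pos : 0 ≤ b' := by
        rw [hb']
        show (0:A₂) ≤ (‖b‖⁻¹ : ℝ) • b
        exact smul_nonneg (by positivity) hb
      have hb'norm : ‖b'‖ ≤ 1 := by
        rw [hb', norm_smul]
        simp [abs_of_nonneg (inv_nonneg.mpr hnb.le), inv_mul_cancel₀ hnb.ne']
      have h := hkey b' hb'pos hb'norm a
      have e1 : K.ι₂ b = (‖b‖ : ℂ) • K.ι₂ b' := by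
        rw [hb', map_smul, smul_smul, ← Complex.ofReal_mul, mul_inv_cancel₀ hnb.ne',
          Complex.ofReal_one, one_smul]
      have e2 : φ₂ b = (‖b‖ : ℂ) * φ₂ b' := by
        rw [hφ₂apply, hφ₂apply, e1, map_smul, smul_eq_mul]
      calc φ (K.ι₁ a * K.ι₂ b) = (‖b‖ : ℂ) * φ (K.ι₁ a * K.ι₂ b') := by
            rw [e1, mul_smul_comm, map_smul, smul_eq_mul]
        _ = (‖b‖ : ℂ) * (φ₁ a * φ₂ b') := by rw [h]
        _ = φ₁ a * φ₂ b := by rw [e2]; ring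
  -- extend to all b by linearity
  intro a b
  have hmem : b ∈ Submodule.span ℂ {x : A₂ | 0 ≤ x} := by
    rw [CStarAlgebra.span_nonneg]; trivial
  induction hmem using Submodule.span_induction with
  | mem x h => exact hpos_all x h a
  | zero => simp [hφ₂apply]
  | add x y hx hy ihx ihy =>
      rw [map_add, mul_add, map_add, map_add, mul_add, ihx, ihy]
  | smul z x hx ih =>
      rw [map_smul, mul_smul_comm, map_smul, map_smul, smul_eq_mul, smul_eq_mul, ih]
      ring
end
end

section
/- Let H = ℓ²(F₂) where F₂ is the free group on two generators, let A = C*_r(F₂) + K(H) ⊆ B(H), where C*_r(F₂) acts by the left regular representation and K(H) denotes the compact operators. Let {e_g : g ∈ F₂} be the rank-one projections onto the basis vectors ξ_g, and let C be the C*-algebra generated by {e_g : g ∈ F₂} ∪ {1}. Then C is a maximal abelian subalgebra of A. -/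
set_option maxHeartbeats 1000000
set_option synthInstance.maxHeartbeats 1000000

open scoped ComplexOrder TensorProduct

noncomputable section

/-! ### Concrete setup: the free group `F₂`, `ℓ²(F₂)` and `B(ℓ²(F₂))` -/

/-- The free group on two generators. -/
abbrev G2 := FreeGroup (Fin 2)

/-- The Hilbert space `ℓ²(F₂)`. -/
abbrev H2 := lp (fun _ : G2 => ℂ) 2

/-- The canonical orthonormal basis vector `ξ_g` of `ℓ²(F₂)`. -/
def xi (g : G2) : H2 := lp.single 2 g 1

/-- The rank-one operator `e_{g,h} : ξ ↦ ⟨ξ, ξ_h⟩ ξ_g` on `ℓ²(F₂)`; `e_{g,g}` is the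
orthogonal projection onto `ℂ ξ_g`. -/
def EE (g h : G2) : H2 →L[ℂ] H2 := (innerSL ℂ (xi h)).smulRight (xi g)

/-- The reduced group C*-algebra `C*_r(F₂)`: the C*-subalgebra of `B(ℓ²(F₂))` generated
by the left regular representation `lam`. -/
def CrS (lam : G2 → (H2 →L[ℂ] H2)) : StarSubalgebra ℂ (H2 →L[ℂ] H2) :=
  (StarAlgebra.adjoin ℂ (Set.range lam)).topologicalClosure

/-- The C*-algebra `A = C*_r(F₂) + K(ℓ²(F₂))`, as a subset of `B(ℓ²(F₂))`. -/
def Acar (lam : G2 → (H2 →L[ℂ] H2)) : Set (H2 →L[ℂ] H2) :=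
  {x | ∃ a ∈ CrS lam, ∃ k : H2 →L[ℂ] H2, IsCompactOperator k ∧ x = a + k}

/-- The atomic masa `C`: the C*-algebra generated by the diagonal projections
`{e_g : g ∈ F₂}` together with `1`. -/
def CS : StarSubalgebra ℂ (H2 →L[ℂ] H2) :=
  (StarAlgebra.adjoin ℂ (Set.range fun g : G2 => EE g g)).topologicalClosure

namespace Stmt9Aux
open Filter Topology ContinuousLinearMap
open scoped ENNReal
local notation "⟪" x ", " y "⟫" => @inner ℂ _ _ x y
lemma coord (v : H2) (g : G2) : ⟪xi g, v⟫ = v g := by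
  simp [xi, lp.inner_single_left]
lemma xi_apply (g h : G2) : (xi g : ∀ _ : G2, ℂ) h = if h = g then 1 else 0 := by
  rw [xi, lp.single_apply]; split_ifs with h' <;> simp [h']
lemma inner_xi (g h : G2) : ⟪xi g, xi h⟫ = if g = h then 1 else 0 := by
  rw [coord, xi_apply]
lemma norm_xi (g : G2) : ‖xi g‖ = 1 := by
  have := lp.norm_single (p := 2) (E := fun _ : G2 => ℂ) (by norm_num) g (1:ℂ)
  simpa [xi] using this
lemma hasSum_basis (v : H2) : HasSum (fun g : G2 => (v g : ℂ) • xi g) v := by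
  have h := lp.hasSum_single (E := fun _ : G2 => ℂ) ENNReal.ofNat_ne_top v
  convert h using 2 with g
  rw [xi, ← lp.single_smul]; norm_num
lemma clm_ext_basis {A B : H2 →L[ℂ] H2} (h : ∀ g, A (xi g) = B (xi g)) : A = B := by
  refine ContinuousLinearMap.ext fun v => ?_
  exact HasSum.unique (by simpa [h] using (hasSum_basis v).mapL A) ((hasSum_basis v).mapL B)
lemma EE_apply (g h : G2) (v : H2) : EE g h v = ⟪xi h, v⟫ • xi g := rfl
lemma EE_xi (g h k : G2) : EE g h (xi k) = if h = k then xi g else 0 := by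
  rw [EE_apply, inner_xi]; split_ifs <;> simp

-- ### new stuff
section lam
variable {lam : G2 → (H2 →L[ℂ] H2)} (hlam : ∀ g h : G2, lam g (xi h) = xi (g * h))
include hlam

lemma lam_mul (g h : G2) : lam g * lam h = lam (g * h) := by
  apply clm_ext_basis
  intro k
  simp only [ContinuousLinearMap.mul_apply, hlam, mul_assoc]

lemma lam_one : lam 1 = 1 := by
  apply clm_ext_basis
  intro k
  simp [hlam]

lemma lam_coord (g : G2) (v : H2) (k : G2) : ((lam g v : H2) : ∀ _ : G2, ℂ) k = v (g⁻¹ * k) := by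
  rw [← coord]
  have h1 : HasSum (fun h : G2 => (v h : ℂ) • xi (g * h)) (lam g v) := by
    simpa [hlam] using (hasSum_basis v).mapL (lam g)
  have h2 : HasSum (fun h : G2 => ⟪xi k, (v h : ℂ) • xi (g * h)⟫) ⟪xi k, lam g v⟫ :=
    h1.mapL (innerSL ℂ (xi k))
  refine HasSum.unique h2 ?_
  have : ∀ h : G2, ⟪xi k, (v h : ℂ) • xi (g * h)⟫ = if h = g⁻¹ * k then v (g⁻¹ * k) else 0 := by
    intro h
    rw [inner_smul_right, inner_xi]
    by_cases hh : h = g⁻¹ * k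
    · subst hh; simp
    · rw [if_neg, if_neg hh, mul_zero]
      intro hk
      subst hk
      exact hh (by group)
  rw [funext this]
  exact hasSum_ite_eq (g⁻¹ * k) _

lemma star_lam (g : G2) : star (lam g) = lam g⁻¹ := by
  rw [ContinuousLinearMap.star_eq_adjoint]
  symm
  rw [ContinuousLinearMap.eq_adjoint_iff]
  intro x y
  rw [lp.inner_eq_tsum, lp.inner_eq_tsum]
  have : ∀ k : G2, ⟪(x : ∀ _ : G2, ℂ) k, ((lam g y : H2) : ∀ _ : G2, ℂ) k⟫
      = ⟪(x : ∀ _ : G2, ℂ) k, (y : ∀ _ : G2, ℂ) (g⁻¹ * k)⟫ := by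
    intro k; rw [lam_coord hlam]
  rw [funext this]
  have := (Equiv.mulLeft g).tsum_eq (f := fun k : G2 => ⟪(x : ∀ _ : G2, ℂ) k, (y : ∀ _ : G2, ℂ) (g⁻¹ * k)⟫)
  rw [← this]
  congr 1
  funext m
  rw [lam_coord hlam]
  simp [Equiv.mulLeft]

end lam

lemma star_EE (g h : G2) : star (EE g h) = EE h g := by
  rw [ContinuousLinearMap.star_eq_adjoint]
  symm
  rw [ContinuousLinearMap.eq_adjoint_iff]
  intro x y
  rw [EE_apply, EE_apply, inner_smul_left, inner_smul_right, inner_conj_symm]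
  ring

lemma EE_mul (a b c d : G2) : EE a b * EE c d = if b = c then EE a d else 0 := by
  apply clm_ext_basis
  intro k
  by_cases h : b = c <;>
    simp [ContinuousLinearMap.mul_apply, EE_xi, h] <;> split_ifs <;> simp_all [EE_xi]


section span
variable {lam : G2 → (H2 →L[ℂ] H2)} (hlam : ∀ g h : G2, lam g (xi h) = xi (g * h))
include hlam

lemma adjoin_lam_sub_span {a : H2 →L[ℂ] H2} (ha : a ∈ StarAlgebra.adjoin ℂ (Set.range lam)) :
    a ∈ Submodule.span ℂ (Set.range lam) := by
  have hmul : ∀ x ∈ Submodule.span ℂ (Set.range lam), ∀ y ∈ Submodule.span ℂ (Set.range lam),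
      x * y ∈ Submodule.span ℂ (Set.range lam) := by
    intro x hx
    induction hx using Submodule.span_induction with
    | mem x hx =>
      intro y hy
      induction hy using Submodule.span_induction with
      | mem y hy =>
        obtain ⟨g, rfl⟩ := hx; obtain ⟨h, rfl⟩ := hy
        rw [lam_mul hlam]
        exact Submodule.subset_span ⟨g * h, rfl⟩
      | zero => rw [mul_zero]; exact Submodule.zero_mem _
      | add y z _ _ hy hz => rw [mul_add]; exact Submodule.add_mem _ hy hz
      | smul c y _ hy => rw [mul_smul_comm]; exact Submodule.smul_mem _ _ hy
    | zero => intro y hy; rw [zero_mul]; exact Submodule.zero_mem _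
    | add x z _ _ hx hz => intro y hy; rw [add_mul]; exact Submodule.add_mem _ (hx y hy) (hz y hy)
    | smul c x _ hx => intro y hy; rw [smul_mul_assoc]; exact Submodule.smul_mem _ _ (hx y hy)
  have hstar : ∀ x ∈ Submodule.span ℂ (Set.range lam),
      star x ∈ Submodule.span ℂ (Set.range lam) := by
    intro x hx
    induction hx using Submodule.span_induction with
    | mem x hx => obtain ⟨g, rfl⟩ := hx; rw [star_lam hlam]; exact Submodule.subset_span ⟨g⁻¹, rfl⟩
    | zero => rw [star_zero]; exact Submodule.zero_mem _
    | add x y _ _ hx hy => rw [star_add]; exact Submodule.add_mem _ hx hy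
    | smul c x _ hx => rw [star_smul]; exact Submodule.smul_mem _ _ hx
  induction ha using StarAlgebra.adjoin_induction with
  | mem x hx => exact Submodule.subset_span hx
  | algebraMap r =>
    rw [Algebra.algebraMap_eq_smul_one, ← lam_one hlam]
    exact Submodule.smul_mem _ _ (Submodule.subset_span ⟨1, rfl⟩)
  | add x y _ _ hx hy => exact Submodule.add_mem _ hx hy
  | mul x y _ _ hx hy => exact hmul x hx y hy
  | star x _ hx => exact hstar x hx

lemma diag_const {a : H2 →L[ℂ] H2} (ha : a ∈ CrS lam) (g : G2) :
    ⟪xi g, a (xi g)⟫ = ⟪xi 1, a (xi 1)⟫ := by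
  set S : Set (H2 →L[ℂ] H2) := {a | ∀ g : G2, ⟪xi g, a (xi g)⟫ = ⟪xi 1, a (xi 1)⟫} with hS
  have hcont : ∀ k : G2, Continuous fun b : H2 →L[ℂ] H2 => ⟪xi k, b (xi k)⟫ := by
    intro k
    exact (innerSL ℂ (xi k)).continuous.comp
      (ContinuousLinearMap.apply ℂ H2 (xi k)).continuous
  have hclosed : IsClosed S := by
    have : S = ⋂ k : G2, {b : H2 →L[ℂ] H2 | ⟪xi k, b (xi k)⟫ = ⟪xi 1, b (xi 1)⟫} := by
      ext b; simp [hS, Set.mem_iInter]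
    rw [this]
    exact isClosed_iInter fun k => isClosed_eq (hcont k) (hcont 1)
  have hspan : ∀ b ∈ Submodule.span ℂ (Set.range lam), b ∈ S := by
    intro b hb
    induction hb using Submodule.span_induction with
    | mem x hx =>
      obtain ⟨h, rfl⟩ := hx
      intro k
      rw [hlam, hlam, inner_xi, inner_xi, mul_one]
      have hiff : (k = h * k) ↔ (1 = h) := by
        rw [right_eq_mul, eq_comm]
      rw [if_congr hiff rfl rfl]
    | zero => intro k; simp
    | add x y _ _ hx hy =>
      intro k
      simp only [ContinuousLinearMap.add_apply, inner_add_right]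
      rw [hx k, hy k]
    | smul c x _ hx =>
      intro k
      simp only [ContinuousLinearMap.smul_apply, inner_smul_right]
      rw [hx k]
  have hsub : (StarAlgebra.adjoin ℂ (Set.range lam) : Set (H2 →L[ℂ] H2)) ⊆ S :=
    fun b hb => hspan b (adjoin_lam_sub_span hlam hb)
  have : a ∈ closure (StarAlgebra.adjoin ℂ (Set.range lam) : Set (H2 →L[ℂ] H2)) := by
    rw [← StarSubalgebra.topologicalClosure_coe]
    exact ha
  exact (closure_minimal hsub hclosed) this g

end span

lemma coord_tendsto (w : H2) : Tendsto (fun m : G2 => (w m : ℂ)) cofinite (𝓝 0) := by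
  have ht : (2:ℝ≥0∞).toReal = (2:ℝ) := by norm_num
  have hs : Summable (fun m : G2 => ‖(w m : ℂ)‖ ^ (2:ℝ)) := by
    have := (lp.memℓp w).summable (p := 2) (by norm_num)
    rwa [ht] at this
  have h1 : Tendsto (fun m : G2 => ‖(w m : ℂ)‖ ^ (2:ℝ)) cofinite (𝓝 0) :=
    hs.tendsto_cofinite_zero
  rw [tendsto_zero_iff_norm_tendsto_zero]
  have h2 : Tendsto (fun m : G2 => Real.sqrt (‖(w m : ℂ)‖ ^ (2:ℝ))) cofinite (𝓝 0) := by
    have hsq : Tendsto Real.sqrt (𝓝 0) (𝓝 0) := by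
      simpa [Real.sqrt_zero] using Real.continuous_sqrt.tendsto 0
    exact hsq.comp h1
  convert h2 using 2 with m
  rw [Real.rpow_two, Real.sqrt_sq (norm_nonneg _)]

lemma compact_xi_tendsto {k : H2 →L[ℂ] H2} (hk : IsCompactOperator (k : H2 → H2)) :
    Tendsto (fun g : G2 => k (xi g)) cofinite (𝓝 0) := by
  by_contra hcon
  rw [Metric.tendsto_nhds] at hcon
  push_neg at hcon
  obtain ⟨ε, hε, hfreq⟩ := hcon
  have hSinf : {g : G2 | ¬ dist (k (xi g)) 0 < ε}.Infinite := by
    intro hfin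
    exact hfreq (Filter.eventually_cofinite.mpr (by simpa [not_le] using hfin))
  have hb : Bornology.IsBounded (Set.range xi) := by
    rw [isBounded_iff_forall_norm_le]
    exact ⟨1, by rintro x ⟨g, rfl⟩; rw [norm_xi]⟩
  have hKc : IsCompact (closure ((k : H2 → H2) '' Set.range xi)) :=
    hk.isCompact_closure_image_of_bounded (f := (k : H2 →ₗ[ℂ] H2)) hb
  let e := hSinf.natEmbedding
  have hmem : ∀ n, k (xi (e n)) ∈ closure ((k : H2 → H2) '' Set.range xi) := fun n =>
    subset_closure ⟨xi (e n), ⟨_, rfl⟩, rfl⟩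
  obtain ⟨y, hyK, φ, hφ, hconv⟩ := hKc.tendsto_subseq hmem
  have hεy : ε ≤ ‖y‖ := by
    refine ge_of_tendsto hconv.norm (Filter.Eventually.of_forall fun n => ?_)
    have h := (e (φ n)).2
    simp only [Set.mem_setOf_eq, dist_zero_right, not_lt] at h
    exact h
  have h2 : Tendsto (fun n => ⟪y, k (xi (e (φ n)))⟫) atTop (𝓝 ⟪y, y⟫) :=
    tendsto_const_nhds.inner hconv
  have hinj : Function.Injective (fun n => ((e (φ n)) : G2)) := fun a b hab =>
    hφ.injective (e.injective (Subtype.ext hab))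
  have h3 : Tendsto (fun n => ⟪y, k (xi (e (φ n)))⟫) atTop (𝓝 0) := by
    have hcoord := coord_tendsto ((ContinuousLinearMap.adjoint k) y)
    have hc : Tendsto (fun n => (((ContinuousLinearMap.adjoint k) y : H2) : ∀ _ : G2, ℂ)
        ((e (φ n)) : G2)) atTop (𝓝 0) := hcoord.comp (Nat.cofinite_eq_atTop ▸ hinj.tendsto_cofinite)
    have hc2 : Tendsto (fun n => (starRingEnd ℂ) ((((ContinuousLinearMap.adjoint k) y : H2) :
        ∀ _ : G2, ℂ) ((e (φ n)) : G2))) atTop (𝓝 0) := by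
      have := (continuous_star.tendsto (0 : ℂ)).comp hc
      simpa [Function.comp_def] using this
    convert hc2 using 2 with n
    rw [← ContinuousLinearMap.adjoint_inner_left, ← inner_conj_symm, coord]
  have hyy : ⟪y, y⟫ = 0 := tendsto_nhds_unique h2 h3
  rw [inner_self_eq_zero] at hyy
  rw [hyy, norm_zero] at hεy
  exact absurd hεy (not_le.mpr hε)

lemma EE_compact (g h : G2) : IsCompactOperator (EE g h : H2 → H2) := by
  refine ⟨(fun c : ℂ => c • xi g) '' Metric.closedBall 0 1, ?_, ?_⟩
  · exact (isCompact_closedBall (0:ℂ) 1).image (continuous_id.smul continuous_const)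
  · refine Filter.mem_of_superset (Metric.ball_mem_nhds (0 : H2) one_pos) ?_
    intro v hv
    refine ⟨⟪xi h, v⟫, ?_, (EE_apply g h v).symm⟩
    rw [Metric.mem_closedBall, dist_zero_right]
    calc ‖⟪xi h, v⟫‖ ≤ ‖xi h‖ * ‖v‖ := norm_inner_le_norm _ _
    _ ≤ 1 := by
        rw [norm_xi, one_mul]
        exact le_of_lt (by simpa [dist_zero_right] using hv)

lemma scalar_bound (c : ℂ) (k : H2 →L[ℂ] H2) (hk : IsCompactOperator (k : H2 → H2)) :
    ‖c‖ ≤ ‖c • (1 : H2 →L[ℂ] H2) + k‖ := by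
  refine le_of_forall_pos_le_add fun ε hε => ?_
  have h1 := compact_xi_tendsto hk
  rw [Metric.tendsto_nhds] at h1
  obtain ⟨g, hg⟩ := (h1 ε hε).exists
  have hkg : ‖k (xi g)‖ < ε := by simpa [dist_zero_right] using hg
  have hid : (c • (1:H2 →L[ℂ] H2) + k) (xi g) - k (xi g) = c • xi g := by simp
  have h2 : ‖c‖ ≤ ‖(c • (1:H2 →L[ℂ] H2) + k) (xi g)‖ + ‖k (xi g)‖ := by
    calc ‖c‖ = ‖c • xi g‖ := by rw [norm_smul, norm_xi, mul_one]
    _ = ‖(c • (1:H2 →L[ℂ] H2) + k) (xi g) - k (xi g)‖ := by rw [hid]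
    _ ≤ _ := norm_sub_le _ _
  have hb : ‖(c • (1:H2 →L[ℂ] H2) + k) (xi g)‖ ≤ ‖c • (1:H2 →L[ℂ] H2) + k‖ := by
    simpa [norm_xi] using (c • (1:H2 →L[ℂ] H2) + k).le_opNorm (xi g)
  linarith

lemma diag_norm_le (z : H2 →L[ℂ] H2) (d : G2 → ℂ) (ε : ℝ) (hε : 0 ≤ ε)
    (hz : ∀ g, z (xi g) = d g • xi g) (hd : ∀ g, ‖d g‖ ≤ ε) : ‖z‖ ≤ ε := by
  refine z.opNorm_le_bound hε fun v => ?_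
  have ht : (2:ℝ≥0∞).toReal = (2:ℝ) := by norm_num
  set w : ∀ _ : G2, ℂ := fun g => v g * d g with hw
  have hsv : Summable (fun g : G2 => ‖(v g : ℂ)‖ ^ (2:ℝ)) := by
    have := (lp.memℓp v).summable (p := 2) (by norm_num); rwa [ht] at this
  have hwle : ∀ g, ‖w g‖ ^ (2:ℝ) ≤ ε ^ (2:ℝ) * ‖(v g : ℂ)‖ ^ (2:ℝ) := by
    intro g
    have h1 : ‖w g‖ ≤ ε * ‖(v g : ℂ)‖ := by
      rw [hw]; dsimp only
      rw [norm_mul, mul_comm]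
      exact mul_le_mul_of_nonneg_right (hd g) (norm_nonneg _)
    calc ‖w g‖ ^ (2:ℝ) ≤ (ε * ‖(v g:ℂ)‖) ^ (2:ℝ) :=
          Real.rpow_le_rpow (norm_nonneg _) h1 (by norm_num)
    _ = ε ^ (2:ℝ) * ‖(v g:ℂ)‖ ^ (2:ℝ) := Real.mul_rpow hε (norm_nonneg _)
  have hsw : Summable (fun g : G2 => ‖w g‖ ^ (2:ℝ)) :=
    Summable.of_nonneg_of_le (fun g => Real.rpow_nonneg (norm_nonneg _) _) hwle (hsv.mul_left _)
  have hmem : Memℓp w 2 := memℓp_gen (by rwa [ht])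
  set W : H2 := ⟨w, hmem⟩ with hWdef
  have hWcoe : ∀ g, (W : ∀ _ : G2, ℂ) g = w g := fun g => rfl
  have h1 : HasSum (fun g : G2 => w g • xi g) (z v) := by
    have h0 := (hasSum_basis v).mapL z
    convert h0 using 2 with g
    rw [map_smul, hz g, smul_smul]
  have h2 : HasSum (fun g : G2 => w g • xi g) W := by
    have h := lp.hasSum_single (E := fun _ : G2 => ℂ) ENNReal.ofNat_ne_top W
    convert h using 2 with g
    rw [xi, ← lp.single_smul, hWcoe]
    norm_num
  have hzv : z v = W := h1.unique h2
  have hnW : ‖W‖ ^ (2:ℝ) = ∑' g : G2, ‖w g‖ ^ (2:ℝ) := by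
    have := lp.norm_rpow_eq_tsum (p := 2) (by norm_num) W
    rwa [ht] at this
  have hnv : ‖v‖ ^ (2:ℝ) = ∑' g : G2, ‖(v g : ℂ)‖ ^ (2:ℝ) := by
    have := lp.norm_rpow_eq_tsum (p := 2) (by norm_num) v
    rwa [ht] at this
  have hle : ‖W‖ ^ (2:ℝ) ≤ (ε * ‖v‖) ^ (2:ℝ) := by
    rw [hnW, Real.mul_rpow hε (norm_nonneg _), hnv, ← tsum_mul_left]
    exact hsw.tsum_le_tsum hwle (hsv.mul_left _)
  rw [hzv, ← Real.rpow_le_rpow_iff (norm_nonneg _) (mul_nonneg hε (norm_nonneg _)) two_pos]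
  exact hle

lemma CS_comm_adjoin : ∀ a ∈ StarAlgebra.adjoin ℂ (Set.range fun g : G2 => EE g g),
    ∀ b ∈ StarAlgebra.adjoin ℂ (Set.range fun g : G2 => EE g g), a * b = b * a := by
  have hEg : ∀ g h : G2, EE g g * EE h h = EE h h * EE g g := by
    intro g h
    rw [EE_mul, EE_mul]
    by_cases hgh : g = h
    · subst hgh; rfl
    · rw [if_neg hgh, if_neg (Ne.symm hgh)]
  have L1 : ∀ b ∈ StarAlgebra.adjoin ℂ (Set.range fun g : G2 => EE g g),
      ∀ g : G2, EE g g * b = b * EE g g := by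
    intro b hb
    induction hb using StarAlgebra.adjoin_induction with
    | mem x hx => obtain ⟨h, rfl⟩ := hx; intro g; exact hEg g h
    | algebraMap r => intro g; exact (Algebra.commutes r _).symm
    | add x y _ _ hx hy => intro g; rw [mul_add, add_mul, hx g, hy g]
    | mul x y _ _ hx hy => intro g; rw [← mul_assoc, hx g, mul_assoc, hy g, mul_assoc]
    | star x _ hx =>
      intro g
      have h2 := congrArg star (hx g)
      rw [star_mul, star_mul, star_EE] at h2
      exact h2.symm
  intro a ha
  induction ha using StarAlgebra.adjoin_induction with
  | mem x hx => obtain ⟨g, rfl⟩ := hx; intro b hb; exact L1 b hb g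
  | algebraMap r => intro b hb; exact Algebra.commutes r b
  | add x y _ _ hx hy => intro b hb; rw [add_mul, mul_add, hx b hb, hy b hb]
  | mul x y _ _ hx hy => intro b hb; rw [mul_assoc, hy b hb, ← mul_assoc, hx b hb, mul_assoc]
  | star x _ hx =>
    intro b hb
    have h1 := hx (star b) (star_mem hb)
    have h2 := congrArg star h1
    rw [star_mul, star_mul, star_star] at h2
    exact h2.symm

lemma CS_adjoin_struct : ∀ a ∈ StarAlgebra.adjoin ℂ (Set.range fun g : G2 => EE g g),
    ∃ c : ℂ, ∃ k : H2 →L[ℂ] H2, IsCompactOperator (k : H2 → H2) ∧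
      IsCompactOperator ((star k : H2 →L[ℂ] H2) : H2 → H2) ∧ a = c • 1 + k := by
  intro a ha
  induction ha using StarAlgebra.adjoin_induction with
  | mem x hx =>
    obtain ⟨g, rfl⟩ := hx
    exact ⟨0, EE g g, EE_compact g g, by rw [star_EE]; exact EE_compact g g, by simp⟩
  | algebraMap r =>
    refine ⟨r, 0, ?_, ?_, ?_⟩
    · simpa using isCompactOperator_zero
    · simpa using isCompactOperator_zero
    · rw [Algebra.algebraMap_eq_smul_one, add_zero]
  | add x y _ _ hx hy =>
    obtain ⟨c, k, hk, hks, rfl⟩ := hx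
    obtain ⟨c', k', hk', hks', rfl⟩ := hy
    refine ⟨c + c', k + k', ?_, ?_, by rw [add_smul]; abel⟩
    · have h0 := hk.add hk'
      have : ((k + k' : H2 →L[ℂ] H2) : H2 → H2) = (k : H2 → H2) + (k' : H2 → H2) := rfl
      rwa [this]
    · have h0 := hks.add hks'
      have : ((star (k + k') : H2 →L[ℂ] H2) : H2 → H2)
          = ((star k : H2 →L[ℂ] H2) : H2 → H2) + ((star k' : H2 →L[ℂ] H2) : H2 → H2) := by
        rw [star_add]; rfl
      rwa [this]
  | mul x y _ _ hx hy =>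
    obtain ⟨c, k, hk, hks, rfl⟩ := hx
    obtain ⟨c', k', hk', hks', rfl⟩ := hy
    refine ⟨c * c', c • k' + c' • k + k * k', ?_, ?_, ?_⟩
    · have h0 : IsCompactOperator ((c • (k' : H2 → H2)) + ((c' • (k : H2 → H2))
          + ((k : H2 → H2) ∘ (k' : H2 → H2)))) :=
        (hk'.smul c).add ((hk.smul c').add (hk.comp_clm k'))
      have : ((c • k' + c' • k + k * k' : H2 →L[ℂ] H2) : H2 → H2)
          = (c • (k' : H2 → H2)) + ((c' • (k : H2 → H2)) + ((k : H2 → H2) ∘ (k' : H2 → H2))) := by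
        funext v; simp [ContinuousLinearMap.add_apply, ContinuousLinearMap.mul_apply]; abel
      rwa [this]
    · have h0 : IsCompactOperator (((starRingEnd ℂ c) • ((star k' : H2 →L[ℂ] H2) : H2 → H2))
          + (((starRingEnd ℂ c') • ((star k : H2 →L[ℂ] H2) : H2 → H2))
          + (((star k' : H2 →L[ℂ] H2) : H2 → H2) ∘ ((star k : H2 →L[ℂ] H2) : H2 → H2)))) :=
        (hks'.smul _).add ((hks.smul _).add (hks'.comp_clm (star k)))
      have : ((star (c • k' + c' • k + k * k') : H2 →L[ℂ] H2) : H2 → H2)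
          = ((starRingEnd ℂ c) • ((star k' : H2 →L[ℂ] H2) : H2 → H2))
          + (((starRingEnd ℂ c') • ((star k : H2 →L[ℂ] H2) : H2 → H2))
          + (((star k' : H2 →L[ℂ] H2) : H2 → H2) ∘ ((star k : H2 →L[ℂ] H2) : H2 → H2))) := by
        funext v
        simp [star_add, star_smul, StarMul.star_mul, ContinuousLinearMap.add_apply,
          ContinuousLinearMap.mul_apply]
        abel
      rwa [this]
    · simp only [mul_add, add_mul, smul_mul_assoc, mul_smul_comm, one_mul, mul_one, smul_smul,
        smul_add, mul_comm c' c]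
      abel
  | star x _ hx =>
    obtain ⟨c, k, hk, hks, rfl⟩ := hx
    refine ⟨starRingEnd ℂ c, star k, hks, by rwa [star_star], ?_⟩
    rw [star_add, star_smul, star_one]
    rfl

section final
variable {lam : G2 → (H2 →L[ℂ] H2)}

lemma part1 : (CS : Set (H2 →L[ℂ] H2)) ⊆ Acar lam := by
  intro x hx
  have hx' : x ∈ closure
      (StarAlgebra.adjoin ℂ (Set.range fun g : G2 => EE g g) : Set (H2 →L[ℂ] H2)) := by
    rw [← StarSubalgebra.topologicalClosure_coe]; exact hx
  obtain ⟨u, hu, hulim⟩ := mem_closure_iff_seq_limit.mp hx'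
  choose c k hk hks hrep using fun n => CS_adjoin_struct (u n) (hu n)
  have hcb : ∀ m n : ℕ, ‖c m - c n‖ ≤ ‖u m - u n‖ := by
    intro m n
    have hmn : u m - u n = (c m - c n) • (1:H2 →L[ℂ] H2) + (k m - k n) := by
      rw [hrep m, hrep n, sub_smul]; abel
    have hcomp : IsCompactOperator ((k m - k n : H2 →L[ℂ] H2) : H2 → H2) := by
      have h0 := (hk m).sub (hk n)
      have hc : ((k m - k n : H2 →L[ℂ] H2) : H2 → H2)
          = (k m : H2 → H2) - (k n : H2 → H2) := rfl
      rwa [hc]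
    calc ‖c m - c n‖ ≤ ‖(c m - c n) • (1:H2 →L[ℂ] H2) + (k m - k n)‖ :=
          scalar_bound _ _ hcomp
    _ = ‖u m - u n‖ := by rw [← hmn]
  have hcauchy : CauchySeq c := by
    have hu' : CauchySeq u := hulim.cauchySeq
    rw [Metric.cauchySeq_iff] at hu' ⊢
    intro ε hε
    obtain ⟨N, hN⟩ := hu' ε hε
    refine ⟨N, fun m hm n hn => ?_⟩
    have h6 := hN m hm n hn
    rw [dist_eq_norm] at h6 ⊢
    exact lt_of_le_of_lt (hcb m n) h6
  obtain ⟨c₀, hc₀⟩ := cauchySeq_tendsto_of_complete hcauchy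
  have hklim : Tendsto (fun n => u n - c n • (1:H2 →L[ℂ] H2)) atTop (𝓝 (x - c₀ • 1)) :=
    hulim.sub (hc₀.smul_const 1)
  have hkcpt : IsCompactOperator ((x - c₀ • 1 : H2 →L[ℂ] H2) : H2 → H2) := by
    refine isCompactOperator_of_tendsto hklim (Filter.Eventually.of_forall fun n => ?_)
    have h1 : u n - c n • (1:H2 →L[ℂ] H2) = k n := by rw [hrep n]; abel
    rw [h1]; exact hk n
  refine ⟨c₀ • 1, ?_, x - c₀ • 1, hkcpt, by abel⟩
  rw [← Algebra.algebraMap_eq_smul_one]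
  exact algebraMap_mem (CrS lam) c₀

lemma part2 : ∀ x ∈ CS, ∀ y ∈ CS, x * y = y * x := by
  intro x hx y hy
  have hx' : x ∈ closure
      (StarAlgebra.adjoin ℂ (Set.range fun g : G2 => EE g g) : Set (H2 →L[ℂ] H2)) := by
    rw [← StarSubalgebra.topologicalClosure_coe]; exact hx
  have hy' : y ∈ closure
      (StarAlgebra.adjoin ℂ (Set.range fun g : G2 => EE g g) : Set (H2 →L[ℂ] H2)) := by
    rw [← StarSubalgebra.topologicalClosure_coe]; exact hy
  have step1 : ∀ a ∈ StarAlgebra.adjoin ℂ (Set.range fun g : G2 => EE g g),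
      a * y = y * a := by
    intro a ha
    have hclosed : IsClosed {b : H2 →L[ℂ] H2 | a * b = b * a} :=
      isClosed_eq (continuous_mul_left a) (continuous_mul_right a)
    exact closure_minimal (fun b hb => CS_comm_adjoin a ha b hb) hclosed hy'
  have hclosed2 : IsClosed {b : H2 →L[ℂ] H2 | b * y = y * b} :=
    isClosed_eq (continuous_mul_right y) (continuous_mul_left y)
  exact closure_minimal (fun a ha => step1 a ha) hclosed2 hx'

variable (hlam : ∀ g h : G2, lam g (xi h) = xi (g * h))
include hlam

lemma part3 : ∀ x ∈ Acar lam, (∀ c ∈ CS, c * x = x * c) → x ∈ CS := by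
  rintro x ⟨a, ha, k, hkcpt, rfl⟩ hcomm
  have hEE_CS : ∀ g : G2, EE g g ∈ CS :=
    fun g => StarSubalgebra.le_topologicalClosure _ (StarAlgebra.subset_adjoin ℂ _ ⟨g, rfl⟩)
  have hdiag : ∀ g : G2, (a + k) (xi g) = ⟪xi g, (a + k) (xi g)⟫ • xi g := by
    intro g
    have h := hcomm (EE g g) (hEE_CS g)
    have h2 := DFunLike.congr_fun h (xi g)
    simp only [ContinuousLinearMap.mul_apply] at h2
    rw [EE_xi, if_pos rfl] at h2
    rw [EE_apply] at h2
    exact h2.symm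
  set τ : ℂ := ⟪xi 1, a (xi 1)⟫ with hτ
  have hcg : ∀ g : G2, ⟪xi g, (a + k) (xi g)⟫ = τ + ⟪xi g, k (xi g)⟫ := by
    intro g
    simp only [ContinuousLinearMap.add_apply, inner_add_right]
    rw [diag_const hlam ha g]
  have hι : Tendsto (fun g : G2 => ⟪xi g, k (xi g)⟫) cofinite (𝓝 0) := by
    rw [tendsto_zero_iff_norm_tendsto_zero]
    have hk0 : Tendsto (fun g : G2 => ‖k (xi g)‖) cofinite (𝓝 0) := by
      have h7 := (compact_xi_tendsto hkcpt).norm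
      rwa [norm_zero] at h7
    refine squeeze_zero (fun g => norm_nonneg _) (fun g => ?_) hk0
    calc ‖⟪xi g, k (xi g)⟫‖ ≤ ‖xi g‖ * ‖k (xi g)‖ := norm_inner_le_norm _ _
    _ = ‖k (xi g)‖ := by rw [norm_xi, one_mul]
  have hmem : (a + k) ∈ closure
      (StarAlgebra.adjoin ℂ (Set.range fun g : G2 => EE g g) : Set (H2 →L[ℂ] H2)) := by
    rw [Metric.mem_closure_iff]
    intro ε hε
    have hfin : {g : G2 | ¬ ‖⟪xi g, k (xi g)⟫‖ < ε/2}.Finite := by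
      have h5 := (Metric.tendsto_nhds.mp hι) (ε/2) (by linarith)
      simp only [dist_zero_right] at h5
      exact Filter.eventually_cofinite.mp h5
    set F := hfin.toFinset with hF
    set b : H2 →L[ℂ] H2 := τ • 1 + ∑ g ∈ F, ⟪xi g, k (xi g)⟫ • EE g g with hb
    have hbmem : b ∈ StarAlgebra.adjoin ℂ (Set.range fun g : G2 => EE g g) := by
      have hsm : ∀ (cc : ℂ) (y : H2 →L[ℂ] H2),
          y ∈ StarAlgebra.adjoin ℂ (Set.range fun g : G2 => EE g g) →
          cc • y ∈ StarAlgebra.adjoin ℂ (Set.range fun g : G2 => EE g g) := by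
        intro cc y hy
        rw [Algebra.smul_def]
        exact mul_mem (algebraMap_mem _ cc) hy
      exact add_mem (hsm τ 1 (one_mem _))
        (sum_mem fun g hg => hsm _ _ (StarAlgebra.subset_adjoin ℂ _ ⟨g, rfl⟩))
    have hzxi : ∀ h : G2, ((a + k) - b) (xi h)
        = (if h ∈ F then 0 else ⟪xi h, k (xi h)⟫) • xi h := by
      intro h
      have hxh : (a + k) (xi h) = (τ + ⟪xi h, k (xi h)⟫) • xi h := by
        rw [hdiag h, hcg h]
      have hsum : ∀ g ∈ F, ⟪xi g, k (xi g)⟫ • (EE g g) (xi h)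
          = if g = h then ⟪xi g, k (xi g)⟫ • xi h else 0 := by
        intro g hg
        rw [EE_xi]
        split_ifs with hgh
        · subst hgh; rfl
        · rw [smul_zero]
      have hbh : b (xi h) = τ • xi h
          + (if h ∈ F then ⟪xi h, k (xi h)⟫ • xi h else 0) := by
        rw [hb]
        simp only [ContinuousLinearMap.add_apply, ContinuousLinearMap.smul_apply,
          ContinuousLinearMap.one_apply, ContinuousLinearMap.sum_apply]
        congr 1
        rw [Finset.sum_congr rfl hsum, Finset.sum_ite_eq' F h
          (fun g => ⟪xi g, k (xi g)⟫ • xi h)]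
      rw [ContinuousLinearMap.sub_apply, hxh, hbh]
      by_cases hF' : h ∈ F
      · rw [if_pos hF', if_pos hF', add_smul, zero_smul]; abel
      · rw [if_neg hF', if_neg hF', add_smul, add_zero]; abel
    have hd : ∀ h : G2, ‖(if h ∈ F then 0 else ⟪xi h, k (xi h)⟫ : ℂ)‖ ≤ ε/2 := by
      intro h
      by_cases hF' : h ∈ F
      · rw [if_pos hF', norm_zero]; linarith
      · rw [if_neg hF']
        have : h ∉ {g : G2 | ¬ ‖⟪xi g, k (xi g)⟫‖ < ε/2} := by
          rwa [← hfin.mem_toFinset]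
        simp only [Set.mem_setOf_eq, not_not] at this
        linarith
    refine ⟨b, hbmem, ?_⟩
    rw [dist_eq_norm]
    have hle := diag_norm_le ((a + k) - b) _ (ε/2) (by linarith) hzxi hd
    linarith
  show (a + k) ∈ (CS : Set (H2 →L[ℂ] H2))
  rw [CS, StarSubalgebra.topologicalClosure_coe]
  exact hmem

end final

end Stmt9Aux

/-- Proposition 4, first part: the atomic diagonal algebra `C` is a
maximal abelian subalgebra of `A = C*_r(F₂) + K(ℓ²(F₂))`. -/
theorem stmt_9 (lam : G2 → (H2 →L[ℂ] H2))
    (hlam : ∀ g h : G2, lam g (xi h) = xi (g * h)) :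
    ((CS : Set (H2 →L[ℂ] H2)) ⊆ Acar lam) ∧
    (∀ x ∈ CS, ∀ y ∈ CS, x * y = y * x) ∧
    ∀ x ∈ Acar lam, (∀ c ∈ CS, c * x = x * c) → x ∈ CS := by
  exact ⟨Stmt9Aux.part1, Stmt9Aux.part2, Stmt9Aux.part3 hlam⟩
end
end

section
/- Let A₀ = uBu + K(H) where B = C*_r(F₂) ⊕ 0 acts on H = H₁ ⊕ H₂ (with H₁ ≅ ℓ²(F₂) carrying the left regular representation and B acting as 0 on H₂), and u is the self-adjoint unitary interchanging the even/odd basis structure as above. Let C₀ be the C*-algebra generated by the diagonal projections {e_{ii} : i ∈ ℕ} (without the identity). Then A₀ is non-unital and C₀ is a maximal abelian subalgebra of A₀. -/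
set_option maxHeartbeats 1000000
set_option synthInstance.maxHeartbeats 1000000

open scoped ComplexOrder TensorProduct

noncomputable section

/-! ### Concrete setup: `ℓ²(ℕ)` with its standard basis, and the unitary `u` -/

/-- The Hilbert space `ℓ²(ℕ)`. -/
abbrev HN := lp (fun _ : ℕ => ℂ) 2

/-- The standard orthonormal basis vector `ξ_i` of `ℓ²(ℕ)`. -/
def xiN (i : ℕ) : HN := lp.single 2 i 1

/-- The rank-one operator `e_{i,j} : ξ ↦ ⟨ξ, ξ_j⟩ ξ_i` on `ℓ²(ℕ)`. -/
def EN (i j : ℕ) : HN →L[ℂ] HN := (innerSL ℂ (xiN j)).smulRight (xiN i)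

/-- That `u : B(ℓ²(ℕ))` acts on the basis by `u ξ_{2i} = (ξ_{2i} + ξ_{2i+1})/√2` and
`u ξ_{2i+1} = (ξ_{2i} − ξ_{2i+1})/√2` (the even/odd indices playing the roles of the
indices `2i`, `2i−1` of the paper). -/
def IsHadamardPairing (u : HN →L[ℂ] HN) : Prop :=
  (∀ i : ℕ, u (xiN (2 * i)) = ((Real.sqrt 2)⁻¹ : ℝ) • (xiN (2 * i) + xiN (2 * i + 1))) ∧
  (∀ i : ℕ, u (xiN (2 * i + 1)) = ((Real.sqrt 2)⁻¹ : ℝ) • (xiN (2 * i) - xiN (2 * i + 1)))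

/-- The closed subspace `H₁` spanned by the even basis vectors. -/
def Heven : Submodule ℂ HN :=
  (Submodule.span ℂ (Set.range fun i : ℕ => xiN (2 * i))).topologicalClosure

/-! ### The algebra `A₀ = uBu + K(H)` of section 3.2 -/

/-- Conjugation of an operator on `ℓ²(F₂)` into an operator on `ℓ²(ℕ)` supported on the
even-index subspace `H₁`, via an isometry `V : ℓ²(F₂) → ℓ²(ℕ)` with range `H₁`:
this realizes `B = C*_r(F₂) ⊕ 0`. -/
def iotaV (V : H2 →L[ℂ] HN) : (H2 →L[ℂ] H2) → (HN →L[ℂ] HN) :=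
  fun a => V ∘L a ∘L (ContinuousLinearMap.adjoint V)

/-- The set `A₀ = uBu + K(H)`. -/
def A0car (lam : G2 → (H2 →L[ℂ] H2)) (V : H2 →L[ℂ] HN) (u : HN →L[ℂ] HN) :
    Set (HN →L[ℂ] HN) :=
  {x | ∃ a ∈ CrS lam, ∃ k : HN →L[ℂ] HN, IsCompactOperator k ∧ x = u * iotaV V a * u + k}

/-- `C₀`: the (non-unital) C*-algebra generated by the diagonal rank-one projections
`e_{ii}`, `i ∈ ℕ`. -/
def C0S : NonUnitalStarSubalgebra ℂ (HN →L[ℂ] HN) :=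
  (NonUnitalStarAlgebra.adjoin ℂ (Set.range fun i : ℕ => EN i i)).topologicalClosure

/-! ### Auxiliary lemmas -/

section Aux

local notation "⟪" x ", " y "⟫" => @inner ℂ _ _ x y

lemma xiN_coord (i : ℕ) (f : HN) : ⟪xiN i, f⟫ = f i := by
  rw [xiN, lp.inner_single_left]
  simp [RCLike.inner_apply]

lemma xi_coord (g : G2) (f : H2) : ⟪xi g, f⟫ = f g := by
  rw [xi, lp.inner_single_left]
  simp [RCLike.inner_apply]

lemma xiN_apply (i j : ℕ) : (xiN i : ∀ _ : ℕ, ℂ) j = if j = i then 1 else 0 := by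
  rw [xiN, lp.single_apply]
  split_ifs with h <;> simp [h]

lemma inner_xiN_xiN (i j : ℕ) : ⟪xiN i, xiN j⟫ = if i = j then 1 else 0 := by
  rw [xiN_coord, xiN_apply]

lemma inner_xi_xi (g h : G2) : ⟪xi g, xi h⟫ = if g = h then 1 else 0 := by
  rw [xi_coord, xi, lp.single_apply]
  split_ifs with h1 h2 <;> simp_all

lemma xiN_ext {w w' : HN} (h : ∀ i, ⟪xiN i, w⟫ = ⟪xiN i, w'⟫) : w = w' := by
  apply lp.ext; funext i
  have := h i; rwa [xiN_coord, xiN_coord] at this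

lemma xi_ext {w w' : H2} (h : ∀ g, ⟪xi g, w⟫ = ⟪xi g, w'⟫) : w = w' := by
  apply lp.ext; funext g
  have := h g; rwa [xi_coord, xi_coord] at this

lemma norm_xiN (i : ℕ) : ‖xiN i‖ = 1 := by
  have := lp.norm_single (p := 2) (E := fun _ : ℕ => ℂ) (by norm_num) i (1:ℂ)
  simpa [xiN] using this

end Aux
section Aux2

local notation "⟪" x ", " y "⟫" => @inner ℂ _ _ x y

/-- A continuous linear map out of `ℓ²(ι)` is determined by its values on the basis. -/
lemma clm_ext_single {ι : Type*} [DecidableEq ι] {F : Type*} [NormedAddCommGroup F]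
    [NormedSpace ℂ F] {f g : lp (fun _ : ι => ℂ) 2 →L[ℂ] F}
    (h : ∀ i, f (lp.single 2 i 1) = g (lp.single 2 i 1)) : f = g := by
  ext x
  have hs : HasSum (fun i : ι => lp.single 2 i (x i : ℂ)) x :=
    lp.hasSum_single (by norm_num) x
  have hf := hs.mapL f
  have hg := hs.mapL g
  refine hf.unique ?_
  convert hg using 2 with i
  have : lp.single (E := fun _ : ι => ℂ) 2 i (x i) = (x i) • lp.single 2 i (1:ℂ) := by
    rw [← lp.single_smul]; norm_num
  rw [this, map_smul, map_smul, h i]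

lemma clm_ext_xiN {F : Type*} [NormedAddCommGroup F] [NormedSpace ℂ F]
    {f g : HN →L[ℂ] F} (h : ∀ i, f (xiN i) = g (xiN i)) : f = g :=
  clm_ext_single h

lemma clm_ext_xi {F : Type*} [NormedAddCommGroup F] [NormedSpace ℂ F]
    {f g : H2 →L[ℂ] F} (h : ∀ i, f (xi i) = g (xi i)) : f = g :=
  clm_ext_single h

lemma EN_apply (i j : ℕ) (x : HN) : EN i j x = ⟪xiN j, x⟫ • xiN i := rfl

lemma EN_apply_basis (i j m : ℕ) : EN i j (xiN m) = if j = m then xiN i else 0 := by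
  rw [EN_apply, inner_xiN_xiN]
  split_ifs <;> simp

lemma star_EN (i j : ℕ) : star (EN i j) = EN j i := by
  rw [ContinuousLinearMap.star_eq_adjoint]
  symm
  rw [ContinuousLinearMap.eq_adjoint_iff]
  intro x y
  rw [EN_apply, EN_apply, inner_smul_left, inner_smul_right, xiN_coord, xiN_coord,
    ← inner_conj_symm x (xiN i), xiN_coord]
  ring

lemma EN_mul (i j m n : ℕ) : EN i j * EN m n = if j = m then EN i n else 0 := by
  refine ContinuousLinearMap.ext fun x => ?_
  have h1 : EN i j (EN m n x) = ⟪xiN n, x⟫ • EN i j (xiN m) := by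
    rw [EN_apply m n, map_smul]
  rw [ContinuousLinearMap.mul_apply, h1, EN_apply_basis]
  split_ifs <;> simp [EN_apply]

lemma compact_EN (i j : ℕ) : IsCompactOperator (EN i j) := by
  refine ⟨(fun c : ℂ => c • xiN i) '' Metric.closedBall 0 1, ?_, ?_⟩
  · exact ((isCompact_closedBall 0 1).image (by continuity))
  · have : (innerSL ℂ (xiN j) : HN →L[ℂ] ℂ) ⁻¹' Metric.closedBall 0 1 ∈ nhds (0 : HN) := by
      apply ContinuousAt.preimage_mem_nhds (innerSL ℂ (xiN j)).continuous.continuousAt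
      simp only [map_zero]
      exact Metric.closedBall_mem_nhds 0 one_pos
    refine Filter.mem_of_superset this ?_
    intro x hx
    exact ⟨⟪xiN j, x⟫, hx, rfl⟩

end Aux2
section Aux3

local notation "⟪" x ", " y "⟫" => @inner ℂ _ _ x y

lemma C0gen (x : HN →L[ℂ] HN)
    (hx : x ∈ (Set.range fun i : ℕ => EN i i) ∪ star (Set.range fun i : ℕ => EN i i)) :
    ∃ i, x = EN i i := by
  rcases hx with ⟨i, rfl⟩ | hx
  · exact ⟨i, rfl⟩
  · rw [Set.mem_star] at hx
    obtain ⟨i, hi⟩ := hx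
    exact ⟨i, by rw [← star_star x, ← hi, star_EN]⟩

lemma EN_mem_C0S (i : ℕ) : EN i i ∈ C0S :=
  (NonUnitalStarAlgebra.adjoin ℂ _).le_topologicalClosure
    (NonUnitalStarAlgebra.subset_adjoin ℂ _ ⟨i, rfl⟩)

lemma mem_adjoin_C0 {x : HN →L[ℂ] HN}
    (hx : x ∈ NonUnitalStarAlgebra.adjoin ℂ (Set.range fun i : ℕ => EN i i)) :
    x ∈ NonUnitalAlgebra.adjoin ℂ
      ((Set.range fun i : ℕ => EN i i) ∪ star (Set.range fun i : ℕ => EN i i)) := hx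

lemma C0S_compact : ∀ x ∈ C0S, IsCompactOperator x := by
  have hsub : (NonUnitalStarAlgebra.adjoin ℂ (Set.range fun i : ℕ => EN i i) : Set _) ⊆
      {f : HN →L[ℂ] HN | IsCompactOperator f} := by
    intro y hy
    have hy' := mem_adjoin_C0 hy
    clear hy
    induction hy' using NonUnitalAlgebra.adjoin_induction with
    | mem z hz => obtain ⟨i, rfl⟩ := C0gen z hz; exact compact_EN i i
    | add a b _ _ ha hb => exact ha.add hb
    | zero => exact isCompactOperator_zero
    | mul a b _ _ ha hb => exact ha.comp_clm b
    | smul r a _ ha => exact ha.smul r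
  intro x hx
  exact closure_minimal hsub isClosed_setOf_isCompactOperator hx

lemma C0S_comm : ∀ x ∈ C0S, ∀ y ∈ C0S, x * y = y * x := by
  have hadj : ∀ x ∈ NonUnitalStarAlgebra.adjoin ℂ (Set.range fun i : ℕ => EN i i),
      ∀ y ∈ NonUnitalStarAlgebra.adjoin ℂ (Set.range fun i : ℕ => EN i i), x * y = y * x := by
    intro x hx y hy
    have hx' := mem_adjoin_C0 hx
    have hy' := mem_adjoin_C0 hy
    clear hx hy
    induction hx', hy' using NonUnitalAlgebra.adjoin_induction₂ with
    | mem_mem a b ha hb =>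
        obtain ⟨i, rfl⟩ := C0gen a ha
        obtain ⟨j, rfl⟩ := C0gen b hb
        rw [EN_mul, EN_mul]
        rcases eq_or_ne i j with rfl | hij
        · simp
        · rw [if_neg hij, if_neg (Ne.symm hij)]
    | zero_left a _ => simp
    | zero_right a _ => simp
    | add_left a b c _ _ _ h1 h2 => rw [add_mul, mul_add, h1, h2]
    | add_right a b c _ _ _ h1 h2 => rw [mul_add, add_mul, h1, h2]
    | mul_left a b c _ _ _ h1 h2 => rw [mul_assoc, h2, ← mul_assoc, h1, mul_assoc]
    | mul_right a b c _ _ _ h1 h2 => rw [← mul_assoc, h1, mul_assoc, h2, ← mul_assoc]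
    | smul_left r a b _ _ h => rw [smul_mul_assoc, h, mul_smul_comm]
    | smul_right r a b _ _ h => rw [mul_smul_comm, h, smul_mul_assoc]
  intro x hx y hy
  have step1 : ∀ y ∈ NonUnitalStarAlgebra.adjoin ℂ (Set.range fun i : ℕ => EN i i),
      x * y = y * x := by
    intro z hz
    have hcl : (C0S : Set (HN →L[ℂ] HN)) ⊆ {w | w * z = z * w} := by
      refine closure_minimal (fun w hw => hadj w hw z hz) ?_
      exact isClosed_eq (continuous_id.mul continuous_const) (continuous_const.mul continuous_id)
    exact hcl hx
  have hcl2 : (C0S : Set (HN →L[ℂ] HN)) ⊆ {w | x * w = w * x} := by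
    refine closure_minimal (fun w hw => step1 w hw) ?_
    exact isClosed_eq (continuous_const.mul continuous_id) (continuous_id.mul continuous_const)
  exact hcl2 hy

end Aux3
section Aux4

local notation "⟪" x ", " y "⟫" => @inner ℂ _ _ x y

lemma rsmulN (r : ℝ) (v : HN) : r • v = (r : ℂ) • v := by
  rw [← smul_one_smul ℂ r v, Complex.real_smul, mul_one]

lemma c2_mul_c2 : (((Real.sqrt 2)⁻¹ : ℝ) : ℂ) * (((Real.sqrt 2)⁻¹ : ℝ) : ℂ) = 1 / 2 := by
  rw [← Complex.ofReal_mul, ← mul_inv, Real.mul_self_sqrt (by norm_num)]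
  norm_num

variable (u : HN →L[ℂ] HN) (iso : G2 ≃ ℕ) (V : H2 →L[ℂ] HN)

lemma Vadj_even (hV : ∀ g : G2, V (xi g) = xiN (2 * iso g)) (j : ℕ) :
    ContinuousLinearMap.adjoint V (xiN (2 * j)) = xi (iso.symm j) := by
  apply xi_ext; intro g
  rw [ContinuousLinearMap.adjoint_inner_right, hV, inner_xiN_xiN, inner_xi_xi]
  by_cases h : g = iso.symm j
  · subst h; simp
  · rw [if_neg ?_, if_neg h]
    intro hc
    exact h (by rw [← iso.symm_apply_apply g, Nat.eq_of_mul_eq_mul_left (by norm_num) hc])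

lemma Vadj_odd (hV : ∀ g : G2, V (xi g) = xiN (2 * iso g)) (j : ℕ) :
    ContinuousLinearMap.adjoint V (xiN (2 * j + 1)) = 0 := by
  apply xi_ext; intro g
  rw [ContinuousLinearMap.adjoint_inner_right, hV, inner_xiN_xiN, inner_zero_right]
  rw [if_neg (by omega)]

lemma inner_u_V (hu : IsHadamardPairing u) (hV : ∀ g : G2, V (xi g) = xiN (2 * iso g))
    (i : ℕ) (m : ℕ) (hm : m = 2 * i ∨ m = 2 * i + 1) (ζ : H2) :
    ⟪xiN m, u (V ζ)⟫ = (((Real.sqrt 2)⁻¹ : ℝ) : ℂ) * ⟪xi (iso.symm i), ζ⟫ := by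
  have key : (innerSL ℂ (xiN m)).comp (u.comp V) =
      (((Real.sqrt 2)⁻¹ : ℝ) : ℂ) • innerSL ℂ (xi (iso.symm i)) := by
    apply clm_ext_xi; intro g
    simp only [ContinuousLinearMap.comp_apply, ContinuousLinearMap.smul_apply,
      innerSL_apply_apply, smul_eq_mul]
    rw [hV, hu.1 (iso g), rsmulN, inner_smul_right, inner_add_right,
      inner_xiN_xiN, inner_xiN_xiN, inner_xi_xi]
    rcases hm with rfl | rfl
    · by_cases h : iso g = i
      · rw [if_pos (by omega), if_neg (by omega), if_pos (by rw [← h, iso.symm_apply_apply])]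
        ring
      · rw [if_neg (by omega), if_neg (by omega),
          if_neg (fun hc => h (by rw [← iso.apply_symm_apply i, ← hc]))]
        ring
    · by_cases h : iso g = i
      · rw [if_neg (by omega), if_pos (by omega), if_pos (by rw [← h, iso.symm_apply_apply])]
        ring
      · rw [if_neg (by omega), if_neg (by omega),
          if_neg (fun hc => h (by rw [← iso.apply_symm_apply i, ← hc]))]
        ring
  have := congrArg (fun f : H2 →L[ℂ] ℂ => f ζ) key
  simpa using this

lemma entry (hu : IsHadamardPairing u) (hV : ∀ g : G2, V (xi g) = xiN (2 * iso g))
    (a : H2 →L[ℂ] H2) (i j m n : ℕ)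
    (hm : m = 2 * i ∨ m = 2 * i + 1) (hn : n = 2 * j ∨ n = 2 * j + 1) :
    ⟪xiN m, (u * iotaV V a * u) (xiN n)⟫ =
      (1 / 2 : ℂ) * ⟪xi (iso.symm i), a (xi (iso.symm j))⟫ := by
  have happ : (u * iotaV V a * u) (xiN n) =
      u ((iotaV V a) (u (xiN n))) := rfl
  have hmid : (iotaV V a) (u (xiN n)) =
      (((Real.sqrt 2)⁻¹ : ℝ) : ℂ) • V (a (xi (iso.symm j))) := by
    rcases hn with rfl | rfl
    · rw [hu.1 j, rsmulN, map_smul]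
      congr 1
      show V (a (ContinuousLinearMap.adjoint V (xiN (2*j) + xiN (2*j+1)))) = _
      rw [map_add, Vadj_even iso V hV, Vadj_odd iso V hV, add_zero]
    · rw [hu.2 j, rsmulN, map_smul]
      congr 1
      show V (a (ContinuousLinearMap.adjoint V (xiN (2*j) - xiN (2*j+1)))) = _
      rw [map_sub, Vadj_even iso V hV, Vadj_odd iso V hV, sub_zero]
  rw [happ, hmid, map_smul, inner_smul_right,
    inner_u_V u iso V hu hV i m hm (a (xi (iso.symm j)))]
  rw [← mul_assoc, c2_mul_c2]

end Aux4
section Aux5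

local notation "⟪" x ", " y "⟫" => @inner ℂ _ _ x y

lemma coord_tendsto (w : HN) :
    Filter.Tendsto (fun m : ℕ => (w : ∀ _ : ℕ, ℂ) m) Filter.atTop (nhds 0) := by
  have hmem : Memℓp (w : ∀ _ : ℕ, ℂ) 2 := lp.memℓp w
  have hsum : Summable fun i : ℕ => ‖(w : ∀ _ : ℕ, ℂ) i‖ ^ (2 : ENNReal).toReal :=
    (memℓp_gen_iff (by norm_num)).1 hmem
  have h2 : Filter.Tendsto (fun m : ℕ => ‖(w : ∀ _ : ℕ, ℂ) m‖ ^ (2 : ENNReal).toReal)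
      Filter.atTop (nhds 0) := hsum.tendsto_atTop_zero
  rw [tendsto_zero_iff_norm_tendsto_zero]
  have h3 := (Real.continuous_sqrt.tendsto 0).comp h2
  rw [Real.sqrt_zero] at h3
  have key : (fun m : ℕ => ‖(w : ∀ _ : ℕ, ℂ) m‖) =
      fun m : ℕ => Real.sqrt (‖(w : ∀ _ : ℕ, ℂ) m‖ ^ (2 : ENNReal).toReal) := by
    funext m
    rw [show ((2 : ENNReal).toReal) = (2 : ℝ) by norm_num, Real.rpow_two,
      Real.sqrt_sq (norm_nonneg _)]
  rw [key]
  exact h3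

lemma compact_norm_tendsto {k : HN →L[ℂ] HN} (hk : IsCompactOperator k) :
    Filter.Tendsto (fun i : ℕ => ‖k (xiN i)‖) Filter.atTop (nhds 0) := by
  have main : Filter.Tendsto (fun i : ℕ => k (xiN i)) Filter.atTop (nhds 0) := by
    apply Filter.tendsto_of_subseq_tendsto
    intro ns hns
    obtain ⟨K, hK, hKsub⟩ :=
      hk.image_closedBall_subset_compact (𝕜₁ := ℂ) (f := (k : HN →ₗ[ℂ] HN)) 1
    have hmem : ∀ n : ℕ, k (xiN (ns n)) ∈ K := fun n =>
      hKsub ⟨xiN (ns n), by simp [norm_xiN], rfl⟩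
    obtain ⟨w, _, φ, hφ, hconv⟩ := hK.tendsto_subseq hmem
    have hw : w = 0 := by
      have hinner : ∀ v : HN, ⟪v, w⟫ = 0 := by
        intro v
        have h1 : Filter.Tendsto (fun n : ℕ => ⟪v, k (xiN (ns (φ n)))⟫)
            Filter.atTop (nhds ⟪v, w⟫) := ((innerSL ℂ v).continuous.tendsto w).comp hconv
        have h2 : Filter.Tendsto (fun m : ℕ => ⟪v, k (xiN m)⟫) Filter.atTop (nhds 0) := by
          have heq : ∀ m : ℕ, ⟪v, k (xiN m)⟫ =
              (starRingEnd ℂ) (((ContinuousLinearMap.adjoint k) v : ∀ _ : ℕ, ℂ) m) := by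
            intro m
            rw [← ContinuousLinearMap.adjoint_inner_left, ← inner_conj_symm, xiN_coord]
          simp only [heq]
          have := (Complex.continuous_conj.tendsto 0).comp
            (coord_tendsto ((ContinuousLinearMap.adjoint k) v))
          simpa [Function.comp_def] using this
        have h3 := h2.comp (hns.comp hφ.tendsto_atTop)
        exact tendsto_nhds_unique h1 h3
      exact inner_self_eq_zero.1 (hinner w)
    exact ⟨φ, hw ▸ hconv⟩
  have := main.norm
  simpa using this

end Aux5
section Aux6

local notation "⟪" x ", " y "⟫" => @inner ℂ _ _ x y

lemma diag_coord {y : HN →L[ℂ] HN} {μ : ℕ → ℂ} (hy : ∀ i, y (xiN i) = μ i • xiN i)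
    (ξ : HN) (m : ℕ) : ⟪xiN m, y ξ⟫ = μ m * (ξ : ∀ _ : ℕ, ℂ) m := by
  have hadj : ContinuousLinearMap.adjoint y (xiN m) = (starRingEnd ℂ) (μ m) • xiN m := by
    apply xiN_ext; intro n
    rw [ContinuousLinearMap.adjoint_inner_right, hy n, inner_smul_left, inner_smul_right,
      inner_xiN_xiN]
    by_cases h : n = m
    · subst h; simp
    · simp [h]
  rw [← ContinuousLinearMap.adjoint_inner_left, hadj, inner_smul_left, xiN_coord]
  simp

lemma diag_norm_le {y : HN →L[ℂ] HN} {μ : ℕ → ℂ} (hy : ∀ i, y (xiN i) = μ i • xiN i)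
    {s : ℝ} (hs : 0 ≤ s) (hμ : ∀ i, ‖μ i‖ ≤ s) : ‖y‖ ≤ s := by
  apply ContinuousLinearMap.opNorm_le_bound _ hs
  intro ξ
  have hcoord : ∀ m : ℕ, ((y ξ : HN) : ∀ _ : ℕ, ℂ) m = μ m * (ξ : ∀ _ : ℕ, ℂ) m := fun m => by
    rw [← xiN_coord, diag_coord hy]
  have ht : ((2 : ENNReal).toReal) = (2 : ℝ) := by norm_num
  have h1 : ‖y ξ‖ ^ (2 : ℝ) = ∑' m : ℕ, ‖μ m * (ξ : ∀ _ : ℕ, ℂ) m‖ ^ (2 : ℝ) := by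
    have := lp.norm_rpow_eq_tsum (p := 2) (by norm_num) (y ξ)
    rw [ht] at this
    rw [this]
    congr 1; funext m; rw [hcoord]
  have h2 : ‖ξ‖ ^ (2 : ℝ) = ∑' m : ℕ, ‖(ξ : ∀ _ : ℕ, ℂ) m‖ ^ (2 : ℝ) := by
    have := lp.norm_rpow_eq_tsum (p := 2) (by norm_num) ξ
    rw [ht] at this
    exact this
  have hsummξ : Summable fun m : ℕ => ‖(ξ : ∀ _ : ℕ, ℂ) m‖ ^ (2 : ℝ) := by
    have := (memℓp_gen_iff (p := 2) (by norm_num)).1 (lp.memℓp ξ)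
    rwa [ht] at this
  have hterm : ∀ m : ℕ, ‖μ m * (ξ : ∀ _ : ℕ, ℂ) m‖ ^ (2 : ℝ) ≤
      s ^ (2 : ℝ) * ‖(ξ : ∀ _ : ℕ, ℂ) m‖ ^ (2 : ℝ) := by
    intro m
    rw [norm_mul, Real.mul_rpow (norm_nonneg _) (norm_nonneg _)]
    apply mul_le_mul _ le_rfl (by positivity) (by positivity)
    exact Real.rpow_le_rpow (norm_nonneg _) (hμ m) (by norm_num)
  have hsum1 : Summable fun m : ℕ => ‖μ m * (ξ : ∀ _ : ℕ, ℂ) m‖ ^ (2 : ℝ) := by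
    apply Summable.of_nonneg_of_le (fun m => by positivity) hterm
    exact hsummξ.mul_left _
  have hle : ‖y ξ‖ ^ (2 : ℝ) ≤ (s * ‖ξ‖) ^ (2 : ℝ) := by
    rw [h1, Real.mul_rpow hs (norm_nonneg _), h2, ← tsum_mul_left]
    exact Summable.tsum_le_tsum hterm hsum1 (hsummξ.mul_left _)
  calc ‖y ξ‖ = Real.sqrt (‖y ξ‖ ^ (2 : ℝ)) := by
        rw [Real.rpow_two, Real.sqrt_sq (norm_nonneg _)]
    _ ≤ Real.sqrt ((s * ‖ξ‖) ^ (2 : ℝ)) := Real.sqrt_le_sqrt hle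
    _ = s * ‖ξ‖ := by rw [Real.rpow_two, Real.sqrt_sq (by positivity)]

lemma diag_mem_C0S {y : HN →L[ℂ] HN} {lam0 : ℕ → ℂ} (hy : ∀ i, y (xiN i) = lam0 i • xiN i)
    (hlim : Filter.Tendsto lam0 Filter.atTop (nhds 0)) : y ∈ C0S := by
  have hcl : y ∈ closure
      (NonUnitalStarAlgebra.adjoin ℂ (Set.range fun i : ℕ => EN i i) : Set (HN →L[ℂ] HN)) := by
    rw [Metric.mem_closure_iff]
    intro ε hε
    obtain ⟨N, hN⟩ := (Metric.tendsto_atTop.1 hlim) (ε / 2) (by linarith)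
    refine ⟨∑ i ∈ Finset.range N, lam0 i • EN i i, ?_, ?_⟩
    · exact sum_mem fun i _ => SMulMemClass.smul_mem _
        (NonUnitalStarAlgebra.subset_adjoin ℂ _ ⟨i, rfl⟩)
    · rw [dist_eq_norm]
      have hdiag : ∀ m : ℕ, (y - ∑ i ∈ Finset.range N, lam0 i • EN i i) (xiN m) =
          (if m < N then 0 else lam0 m) • xiN m := by
        intro m
        have hsum : (∑ i ∈ Finset.range N, lam0 i • EN i i) (xiN m) =
            if m < N then lam0 m • xiN m else 0 := by
          rw [ContinuousLinearMap.sum_apply]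
          simp only [ContinuousLinearMap.smul_apply, EN_apply_basis, smul_ite, smul_zero]
          rw [Finset.sum_ite_eq' (Finset.range N) m (fun i => lam0 i • xiN i)]
          simp [Finset.mem_range]
        rw [ContinuousLinearMap.sub_apply, hy m, hsum]
        split_ifs with h
        · simp
        · simp
      have hbound : ∀ m : ℕ, ‖(if m < N then 0 else lam0 m : ℂ)‖ ≤ ε / 2 := by
        intro m
        split_ifs with h
        · simp; linarith
        · have := hN m (by omega)
          rw [dist_zero_right] at this
          linarith
      have := diag_norm_le hdiag (by linarith) hbound
      linarith
  exact hcl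
end Aux6
section Aux7

local notation "⟪" x ", " y "⟫" => @inner ℂ _ _ x y

lemma diff_entry (u : HN →L[ℂ] HN) (iso : G2 ≃ ℕ) (V : H2 →L[ℂ] HN)
    (hu : IsHadamardPairing u) (hV : ∀ g : G2, V (xi g) = xiN (2 * iso g))
    (a : H2 →L[ℂ] H2) (k : HN →L[ℂ] HN) (i j p p' q : ℕ)
    (hp : p = 2 * i ∨ p = 2 * i + 1) (hp' : p' = 2 * i ∨ p' = 2 * i + 1)
    (hq : q = 2 * j ∨ q = 2 * j + 1) :
    ⟪xiN p, (u * iotaV V a * u + k) (xiN q)⟫ - ⟪xiN p', (u * iotaV V a * u + k) (xiN q)⟫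
      = ⟪xiN p, k (xiN q)⟫ - ⟪xiN p', k (xiN q)⟫ := by
  simp only [ContinuousLinearMap.add_apply, inner_add_right]
  rw [entry u iso V hu hV a i j p q hp hq, entry u iso V hu hV a i j p' q hp' hq]
  ring

lemma inner_diff_bound (k : HN →L[ℂ] HN) (p p' q : ℕ) :
    ‖⟪xiN p, k (xiN q)⟫ - ⟪xiN p', k (xiN q)⟫‖ ≤ 2 * ‖k (xiN q)‖ := by
  have h1 : ‖⟪xiN p, k (xiN q)⟫‖ ≤ ‖k (xiN q)‖ := by
    have := norm_inner_le_norm (𝕜 := ℂ) (xiN p) (k (xiN q))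
    rwa [norm_xiN, one_mul] at this
  have h2 : ‖⟪xiN p', k (xiN q)⟫‖ ≤ ‖k (xiN q)‖ := by
    have := norm_inner_le_norm (𝕜 := ℂ) (xiN p') (k (xiN q))
    rwa [norm_xiN, one_mul] at this
  calc ‖⟪xiN p, k (xiN q)⟫ - ⟪xiN p', k (xiN q)⟫‖
      ≤ ‖⟪xiN p, k (xiN q)⟫‖ + ‖⟪xiN p', k (xiN q)⟫‖ := norm_sub_le _ _
    _ ≤ 2 * ‖k (xiN q)‖ := by linarith

end Aux7

section Main

local notation "⟪" x ", " y "⟫" => @inner ℂ _ _ x y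

/-- `A₀ = uBu + K(H)` is non-unital, and the diagonal algebra `C₀`
(generated by the `e_{ii}` without the identity) is a maximal abelian subalgebra
of `A₀`. -/
theorem stmt_16 (u : HN →L[ℂ] HN) (hu : IsHadamardPairing u)
    (lam : G2 → (H2 →L[ℂ] H2)) (hlam : ∀ g h : G2, lam g (xi h) = xi (g * h))
    (iso : G2 ≃ ℕ) (V : H2 →L[ℂ] HN) (hViso : Isometry V)
    (hV : ∀ g : G2, V (xi g) = xiN (2 * iso g)) :
    (¬∃ e ∈ A0car lam V u, ∀ x ∈ A0car lam V u, e * x = x ∧ x * e = x) ∧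
    ((C0S : Set (HN →L[ℂ] HN)) ⊆ A0car lam V u) ∧
    (∀ x ∈ C0S, ∀ y ∈ C0S, x * y = y * x) ∧
    ∀ x ∈ A0car lam V u, (∀ c ∈ C0S, c * x = x * c) → x ∈ C0S := by
  refine ⟨?_, ?_, C0S_comm, ?_⟩
  · -- non-unital
    rintro ⟨e, ⟨a, _, k, hk, hek⟩, hunit⟩
    have hfix : ∀ i : ℕ, e (xiN i) = xiN i := by
      intro i
      have hmem : EN i i ∈ A0car lam V u :=
        ⟨0, zero_mem _, EN i i, compact_EN i i, by simp [iotaV]⟩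
      have h1 := (hunit _ hmem).1
      have h2 := congrArg (fun f : HN →L[ℂ] HN => f (xiN i)) h1
      simp only [ContinuousLinearMap.mul_apply] at h2
      rwa [EN_apply_basis, if_pos rfl] at h2
    have key : ∀ m : ℕ, (1 : ℝ) ≤ 2 * ‖k (xiN (2 * m + 1))‖ := by
      intro m
      have hdiff : ⟪xiN (2 * m + 1), e (xiN (2 * m + 1))⟫
          - ⟪xiN (2 * m), e (xiN (2 * m + 1))⟫ = 1 := by
        rw [hfix, inner_xiN_xiN, inner_xiN_xiN, if_pos rfl, if_neg (by omega)]
        ring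
      rw [hek] at hdiff
      rw [diff_entry u iso V hu hV a k m m _ _ _ (Or.inr rfl) (Or.inl rfl) (Or.inr rfl)]
        at hdiff
      have := inner_diff_bound k (2 * m + 1) (2 * m) (2 * m + 1)
      rw [hdiff] at this
      simpa using this
    obtain ⟨N, hN⟩ := (Metric.tendsto_atTop.1 (compact_norm_tendsto hk)) (1 / 4) (by norm_num)
    have hN' := hN (2 * N + 1) (by omega)
    rw [dist_zero_right, norm_norm] at hN'
    have := key N
    linarith
  · -- C0S ⊆ A0car
    intro x hx
    exact ⟨0, zero_mem _, x, C0S_compact x hx, by simp [iotaV]⟩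
  · -- maximal abelian
    rintro x ⟨a, _, k, hk, hxeq⟩ hcomm
    set lam0 : ℕ → ℂ := fun i => ⟪xiN i, x (xiN i)⟫ with hlam0
    have hdiag : ∀ i, x (xiN i) = lam0 i • xiN i := by
      intro i
      have h := hcomm (EN i i) (EN_mem_C0S i)
      have h2 := congrArg (fun f : HN →L[ℂ] HN => f (xiN i)) h
      simp only [ContinuousLinearMap.mul_apply] at h2
      rw [EN_apply_basis, if_pos rfl] at h2
      rw [← h2, EN_apply]
    have hoff : ∀ p q : ℕ, p ≠ q → ⟪xiN p, x (xiN q)⟫ = 0 := by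
      intro p q hpq
      rw [hdiag q, inner_smul_right, inner_xiN_xiN, if_neg hpq, mul_zero]
    have hdval : ∀ q : ℕ, ⟪xiN q, x (xiN q)⟫ = lam0 q := fun q => rfl
    have hbound : ∀ i : ℕ, ‖lam0 i‖ ≤ 2 * ‖k (xiN i)‖ := by
      intro i
      rcases Nat.even_or_odd i with ⟨m, hm⟩ | ⟨m, hm⟩
      · have hm' : i = 2 * m := by omega
        subst hm'
        have hdiff : ⟪xiN (2 * m), x (xiN (2 * m))⟫
            - ⟪xiN (2 * m + 1), x (xiN (2 * m))⟫ = lam0 (2 * m) := by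
          rw [hdval, hoff _ _ (by omega)]; ring
        rw [hxeq] at hdiff
        rw [diff_entry u iso V hu hV a k m m _ _ _ (Or.inl rfl) (Or.inr rfl) (Or.inl rfl)]
          at hdiff
        have := inner_diff_bound k (2 * m) (2 * m + 1) (2 * m)
        rwa [hdiff] at this
      · subst hm
        have hdiff : ⟪xiN (2 * m + 1), x (xiN (2 * m + 1))⟫
            - ⟪xiN (2 * m), x (xiN (2 * m + 1))⟫ = lam0 (2 * m + 1) := by
          rw [hdval, hoff _ _ (by omega)]; ring
        rw [hxeq] at hdiff
        rw [diff_entry u iso V hu hV a k m m _ _ _ (Or.inr rfl) (Or.inl rfl) (Or.inr rfl)]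
          at hdiff
        have := inner_diff_bound k (2 * m + 1) (2 * m) (2 * m + 1)
        rwa [hdiff] at this
    have hlim : Filter.Tendsto lam0 Filter.atTop (nhds 0) := by
      apply squeeze_zero_norm hbound
      have := (compact_norm_tendsto hk).const_mul (2 : ℝ)
      simpa using this
    exact diag_mem_C0S hdiag hlim

end Main
end
end
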